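/- arXiv:1107.3834 — 2 statements merged into one kernel-verified Lean document; each statement's English description precedes it below -/
import Mathlib

section
/- The discriminant group of the Kummer lattice Π is isomorphic to (Z/2)^6, with representatives given by the classes of (1/2)Σ_{a ∈ P_{ij}} E_a for the six coordinate planes P_{ij} ⊂ F_2^4, and the discriminant quadratic form with respect to these generators is minus three hyperbolic blocks [[0,1/2],[1/2,0]]. -/
open Submodule

/-- The index set `𝔽₂⁴` of the 16 two-torsion points / exceptional divisors. -/
abbrev F16 := Fin 4 → ZMod 2

/-- The ambient 16-dimensional rational quadratic space containing the Kummer lattice. -/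
abbrev VK := F16 → ℚ

/-- The (negative definite) bilinear form on `VK`, with Gram matrix `diag(-2,…,-2)` on
the standard basis. -/
def BK : VK →ₗ[ℚ] VK →ₗ[ℚ] ℚ :=
  LinearMap.mk₂ ℚ (fun u v => -2 * ∑ a, u a * v a)
    (fun u u' v => by simp [add_mul, Finset.sum_add_distrib]; try ring)
    (fun c u v => by
      simp only [Pi.smul_apply, smul_eq_mul, Finset.mul_sum, neg_mul]
      exact Finset.sum_congr rfl fun x _ => by ring)
    (fun u v v' => by simp [mul_add, Finset.sum_add_distrib]; try ring)
    (fun c u v => by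
      simp only [Pi.smul_apply, smul_eq_mul, Finset.mul_sum, neg_mul]
      exact Finset.sum_congr rfl fun x _ => by ring)

/-- The classes `E_a`, `a ∈ 𝔽₂⁴`, of the exceptional divisors: the standard basis
vectors, of norm `-2`. -/
def EK (a : F16) : VK := fun b => if b = a then 1 else 0

/-- A subset of `𝔽₂⁴` is an affine hyperplane if it is the solution set of a
non-trivial affine-linear equation. -/
def IsAffineHyperplane (H : Finset F16) : Prop :=
  ∃ (φ : F16 →ₗ[ZMod 2] ZMod 2) (c : ZMod 2), φ ≠ 0 ∧ ∀ a, a ∈ H ↔ φ a = c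

/-- The half sum `(1/2) Σ_{a ∈ H} E_a` of the exceptional classes over a subset
`H ⊆ 𝔽₂⁴`. -/
def halfSum (H : Finset F16) : VK := (2 : ℚ)⁻¹ • ∑ a ∈ H, EK a

/-- The Kummer lattice `Π`, spanned by the `E_a` together with the half sums over all
affine hyperplanes of `𝔽₂⁴`. -/
def KummerLat : Submodule ℤ VK :=
  span ℤ (Set.range EK ∪ { v | ∃ H : Finset F16, IsAffineHyperplane H ∧ v = halfSum H })

/-- The dual lattice `L* = {v ∈ span_ℚ L : B(v, L) ⊆ ℤ}` of a lattice `L` inside a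
rational quadratic space. -/
def dualLat {V : Type*} [AddCommGroup V] [Module ℚ V]
    (B : V →ₗ[ℚ] V →ₗ[ℚ] ℚ) (L : Submodule ℤ V) : Submodule ℤ V where
  carrier := { v | v ∈ span ℚ (L : Set V) ∧ ∀ w ∈ L, ∃ k : ℤ, B v w = k }
  add_mem' := by
    rintro a b ⟨haS, ha⟩ ⟨hbS, hb⟩
    refine ⟨add_mem haS hbS, fun w hw => ?_⟩
    obtain ⟨k, hk⟩ := ha w hw
    obtain ⟨l, hl⟩ := hb w hw
    exact ⟨k + l, by simp [hk, hl]⟩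
  zero_mem' := ⟨zero_mem _, fun w _ => ⟨0, by simp⟩⟩
  smul_mem' := by
    rintro c v ⟨hvS, hv⟩
    refine ⟨zsmul_mem hvS c, fun w hw => ?_⟩
    obtain ⟨k, hk⟩ := hv w hw
    refine ⟨c * k, ?_⟩
    have : B (c • v) = c • B v := map_zsmul B c v
    rw [this]
    simp [hk, mul_comm]

/-- The discriminant group `L*/L` of a lattice `L`. -/
abbrev Disc {V : Type*} [AddCommGroup V] [Module ℚ V]
    (B : V →ₗ[ℚ] V →ₗ[ℚ] ℚ) (L : Submodule ℤ V) :=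
  dualLat B L ⧸ (Submodule.comap (dualLat B L).subtype L)

/-- The coordinate plane `P_{ij} = {a ∈ 𝔽₂⁴ : a_k = 0 for k ≠ i, j}`. -/
def Pplane (i j : Fin 4) : Finset F16 :=
  Finset.univ.filter fun a => ∀ k, k ≠ i → k ≠ j → a k = 0

/-- The six index pairs `12, 34, 13, 24, 14, 23` (zero-based). -/
def pairIdx : Fin 6 → Fin 4 × Fin 4 := ![(0,1), (2,3), (0,2), (1,3), (0,3), (1,2)]

/-- The representatives `p_{ij} = (1/2) Σ_{a ∈ P_{ij}} E_a` of the generators of the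
discriminant group of the Kummer lattice, in the order `12, 34, 13, 24, 14, 23`. -/
def pvec (s : Fin 6) : VK := halfSum (Pplane (pairIdx s).1 (pairIdx s).2)

/-- Minus three hyperbolic blocks `[[0,1/2],[1/2,0]]`: the Gram matrix of the
discriminant form of the Kummer lattice on the generators `p_{ij}`. -/
def discGram : Matrix (Fin 6) (Fin 6) ℚ :=
  ![![0, -1/2, 0, 0, 0, 0], ![-1/2, 0, 0, 0, 0, 0],
    ![0, 0, 0, -1/2, 0, 0], ![0, 0, -1/2, 0, 0, 0],
    ![0, 0, 0, 0, 0, -1/2], ![0, 0, 0, 0, -1/2, 0]]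

-- ============ auxiliary development ============
def pt (x y z w : ZMod 2) : F16 := ![x,y,z,w]

lemma BK_apply (u v : VK) : BK u v = -2 * ∑ a, u a * v a := rfl

lemma halfSum_apply (H : Finset F16) (b : F16) :
    halfSum H b = if b ∈ H then (2:ℚ)⁻¹ else 0 := by
  simp only [halfSum, Pi.smul_apply, Finset.sum_apply, EK, smul_eq_mul]
  rw [Finset.sum_ite_eq H b (fun _ => (1:ℚ))]
  by_cases h : b ∈ H <;> simp [h]

lemma sum_halfSum (S T : Finset F16) :
    ∑ a ∈ S, halfSum T a = ((S ∩ T).card : ℚ) * 2⁻¹ := by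
  simp only [halfSum_apply]
  rw [Finset.sum_ite_mem S T (fun _ => (2:ℚ)⁻¹), Finset.sum_const, nsmul_eq_mul]

lemma BK_EK_right (v : VK) (a : F16) : BK v (EK a) = -2 * v a := by
  rw [BK_apply]
  congr 1
  simp only [EK, mul_ite, mul_one, mul_zero]
  rw [Finset.sum_ite_eq' Finset.univ a v]
  simp

lemma BK_halfSum_right (v : VK) (H : Finset F16) :
    BK v (halfSum H) = -∑ a ∈ H, v a := by
  rw [BK_apply]
  simp only [halfSum_apply, mul_ite, mul_zero]
  rw [Finset.sum_ite_mem Finset.univ H (fun a => v a * 2⁻¹), Finset.univ_inter, ← Finset.sum_mul]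
  ring

lemma EK_mem (a : F16) : EK a ∈ KummerLat := subset_span (Or.inl ⟨a, rfl⟩)

lemma halfSum_mem {H : Finset F16} (hH : IsAffineHyperplane H) : halfSum H ∈ KummerLat :=
  subset_span (Or.inr ⟨H, hH, rfl⟩)

lemma int_coords_mem {w : VK} (h : ∀ a, ∃ k : ℤ, w a = (k:ℚ)) : w ∈ KummerLat := by
  choose f hf using h
  have hw : w = ∑ a : F16, f a • EK a := by
    funext b
    rw [Finset.sum_apply]
    simp only [EK, Pi.smul_apply, smul_ite, smul_zero]
    rw [Finset.sum_ite_eq Finset.univ b (fun a => f a • (1:ℚ))]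
    simp [hf b]
  rw [hw]
  exact sum_mem fun a _ => zsmul_mem (EK_mem a) _

lemma spanQ_top : span ℚ (KummerLat : Set VK) = ⊤ := by
  rw [eq_top_iff]
  rintro v -
  have hv : v = ∑ a : F16, v a • EK a := by
    funext b
    rw [Finset.sum_apply]
    simp only [EK, Pi.smul_apply, smul_ite, smul_zero]
    rw [Finset.sum_ite_eq Finset.univ b (fun a => v a • (1:ℚ))]
    simp
  rw [hv]
  exact sum_mem fun a _ => smul_mem _ _ (subset_span (EK_mem a))

lemma mem_dualLat' {v : VK} :
    v ∈ dualLat BK KummerLat ↔ ∀ w ∈ KummerLat, ∃ k : ℤ, BK v w = k := by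
  have : v ∈ dualLat BK KummerLat ↔
      v ∈ span ℚ (KummerLat : Set VK) ∧ ∀ w ∈ KummerLat, ∃ k : ℤ, BK v w = k := Iff.rfl
  rw [this, spanQ_top]
  simp

lemma mem_dual_of_gen {v : VK} (h1 : ∀ a, ∃ k : ℤ, BK v (EK a) = k)
    (h2 : ∀ H, IsAffineHyperplane H → ∃ k : ℤ, BK v (halfSum H) = k) :
    v ∈ dualLat BK KummerLat := by
  rw [mem_dualLat']
  intro w hw
  have hw' : w ∈ span ℤ (Set.range EK ∪
      { v | ∃ H : Finset F16, IsAffineHyperplane H ∧ v = halfSum H }) := hw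
  clear hw
  induction hw' using Submodule.span_induction with
  | mem x hx =>
    rcases hx with ⟨a, rfl⟩ | ⟨H, hH, rfl⟩
    · exact h1 a
    · exact h2 H hH
  | zero => exact ⟨0, by simp⟩
  | add x y hx hy ihx ihy =>
    obtain ⟨k, hk⟩ := ihx; obtain ⟨l, hl⟩ := ihy
    exact ⟨k + l, by rw [map_add, hk, hl]; push_cast; ring⟩
  | smul n x hx ih =>
    obtain ⟨k, hk⟩ := ih
    exact ⟨n * k, by rw [map_zsmul (BK v) n x, hk]; push_cast [zsmul_eq_mul]; ring⟩

lemma coord_int {v : VK} (hv : v ∈ dualLat BK KummerLat) (a : F16) :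
    ∃ k : ℤ, 2 * v a = (k:ℚ) := by
  obtain ⟨k, hk⟩ := hv.2 (EK a) (EK_mem a)
  rw [BK_EK_right] at hk
  exact ⟨-k, by push_cast; linarith⟩

lemma sum2_int {v : VK} (hv : v ∈ dualLat BK KummerLat) (S : Finset F16) :
    ∃ k : ℤ, ∑ a ∈ S, 2 * v a = (k:ℚ) := by
  choose f hf using coord_int hv
  exact ⟨∑ a ∈ S, f a, by push_cast; exact Finset.sum_congr rfl fun a _ => hf a⟩

lemma hyp_sum_int {v : VK} (hv : v ∈ dualLat BK KummerLat) {H : Finset F16}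
    (hH : IsAffineHyperplane H) : ∃ k : ℤ, ∑ a ∈ H, v a = (k:ℚ) := by
  obtain ⟨k, hk⟩ := hv.2 (halfSum H) (halfSum_mem hH)
  rw [BK_halfSum_right] at hk
  exact ⟨-k, by push_cast; linarith⟩

def PlaneS (s : Fin 6) : Finset F16 := Pplane (pairIdx s).1 (pairIdx s).2

lemma pvec_eq (s : Fin 6) : pvec s = halfSum (PlaneS s) := rfl

lemma aux_even (x y c : ZMod 2) :
    Even ((if (0:ZMod 2) = c then 1 else 0) + ((if x = c then 1 else 0) +
      ((if y = c then 1 else 0) + (if x + y = c then 1 else 0))) : ℕ) := by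
  revert x y c; decide

lemma even_card_inter (s : Fin 6) (φ : F16 →ₗ[ZMod 2] ZMod 2) (c : ZMod 2) :
    Even ((PlaneS s).filter (fun a => φ a = c)).card := by
  rw [Finset.card_filter]
  fin_cases s
  · show Even (∑ i ∈ PlaneS 0, if φ i = c then 1 else 0)
    rw [show PlaneS 0 = ({pt 0 0 0 0, pt 1 0 0 0, pt 0 1 0 0, pt 1 1 0 0} : Finset F16) from by decide,
      Finset.sum_insert (by decide), Finset.sum_insert (by decide), Finset.sum_insert (by decide),
      Finset.sum_singleton, show (pt 0 0 0 0 : F16) = 0 from by decide, map_zero,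
      show (pt 1 1 0 0 : F16) = pt 1 0 0 0 + pt 0 1 0 0 from by decide, map_add]
    exact aux_even _ _ c
  · show Even (∑ i ∈ PlaneS 1, if φ i = c then 1 else 0)
    rw [show PlaneS 1 = ({pt 0 0 0 0, pt 0 0 1 0, pt 0 0 0 1, pt 0 0 1 1} : Finset F16) from by decide,
      Finset.sum_insert (by decide), Finset.sum_insert (by decide), Finset.sum_insert (by decide),
      Finset.sum_singleton, show (pt 0 0 0 0 : F16) = 0 from by decide, map_zero,
      show (pt 0 0 1 1 : F16) = pt 0 0 1 0 + pt 0 0 0 1 from by decide, map_add]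
    exact aux_even _ _ c
  · show Even (∑ i ∈ PlaneS 2, if φ i = c then 1 else 0)
    rw [show PlaneS 2 = ({pt 0 0 0 0, pt 1 0 0 0, pt 0 0 1 0, pt 1 0 1 0} : Finset F16) from by decide,
      Finset.sum_insert (by decide), Finset.sum_insert (by decide), Finset.sum_insert (by decide),
      Finset.sum_singleton, show (pt 0 0 0 0 : F16) = 0 from by decide, map_zero,
      show (pt 1 0 1 0 : F16) = pt 1 0 0 0 + pt 0 0 1 0 from by decide, map_add]
    exact aux_even _ _ c
  · show Even (∑ i ∈ PlaneS 3, if φ i = c then 1 else 0)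
    rw [show PlaneS 3 = ({pt 0 0 0 0, pt 0 1 0 0, pt 0 0 0 1, pt 0 1 0 1} : Finset F16) from by decide,
      Finset.sum_insert (by decide), Finset.sum_insert (by decide), Finset.sum_insert (by decide),
      Finset.sum_singleton, show (pt 0 0 0 0 : F16) = 0 from by decide, map_zero,
      show (pt 0 1 0 1 : F16) = pt 0 1 0 0 + pt 0 0 0 1 from by decide, map_add]
    exact aux_even _ _ c
  · show Even (∑ i ∈ PlaneS 4, if φ i = c then 1 else 0)
    rw [show PlaneS 4 = ({pt 0 0 0 0, pt 1 0 0 0, pt 0 0 0 1, pt 1 0 0 1} : Finset F16) from by decide,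
      Finset.sum_insert (by decide), Finset.sum_insert (by decide), Finset.sum_insert (by decide),
      Finset.sum_singleton, show (pt 0 0 0 0 : F16) = 0 from by decide, map_zero,
      show (pt 1 0 0 1 : F16) = pt 1 0 0 0 + pt 0 0 0 1 from by decide, map_add]
    exact aux_even _ _ c
  · show Even (∑ i ∈ PlaneS 5, if φ i = c then 1 else 0)
    rw [show PlaneS 5 = ({pt 0 0 0 0, pt 0 1 0 0, pt 0 0 1 0, pt 0 1 1 0} : Finset F16) from by decide,
      Finset.sum_insert (by decide), Finset.sum_insert (by decide), Finset.sum_insert (by decide),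
      Finset.sum_singleton, show (pt 0 0 0 0 : F16) = 0 from by decide, map_zero,
      show (pt 0 1 1 0 : F16) = pt 0 1 0 0 + pt 0 0 1 0 from by decide, map_add]
    exact aux_even _ _ c

lemma even_card_hyp_inter (s : Fin 6) {H : Finset F16} (hH : IsAffineHyperplane H) :
    Even ((H ∩ PlaneS s).card) := by
  obtain ⟨φ, c, -, hiff⟩ := hH
  have he : H ∩ PlaneS s = (PlaneS s).filter fun a => φ a = c := by
    ext a
    simp only [Finset.mem_inter, Finset.mem_filter, hiff]
    tauto
  rw [he]
  exact even_card_inter s φ c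

lemma pvec_mem_dual (s : Fin 6) : pvec s ∈ dualLat BK KummerLat := by
  apply mem_dual_of_gen
  · intro a
    rw [BK_EK_right, pvec_eq, halfSum_apply]
    by_cases h : a ∈ PlaneS s
    · exact ⟨-1, by rw [if_pos h]; norm_num⟩
    · exact ⟨0, by rw [if_neg h]; norm_num⟩
  · intro H hH
    rw [pvec_eq, BK_halfSum_right, sum_halfSum]
    obtain ⟨m, hm⟩ := even_card_hyp_inter s hH
    exact ⟨-m, by rw [hm]; push_cast; ring⟩

def sigma6 : Fin 6 → Fin 6 := ![1,0,3,2,5,4]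

def phiAux (v : VK) (t : Fin 6) : ZMod 2 :=
  (((∑ a ∈ PlaneS (sigma6 t), 2 * v a : ℚ).num : ℤ) : ZMod 2)

def ΦM : dualLat BK KummerLat →+ (Fin 6 → ZMod 2) where
  toFun v := phiAux v.1
  map_zero' := by
    funext t
    simp [phiAux]
  map_add' v w := by
    funext t
    obtain ⟨k, hk⟩ := sum2_int v.2 (PlaneS (sigma6 t))
    obtain ⟨l, hl⟩ := sum2_int w.2 (PlaneS (sigma6 t))
    have e : (∑ a ∈ PlaneS (sigma6 t), 2 * (v.1 + w.1) a : ℚ) = ((k + l : ℤ):ℚ) := by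
      push_cast
      rw [← hk, ← hl, ← Finset.sum_add_distrib]
      exact Finset.sum_congr rfl fun a _ => by simp [Pi.add_apply]; ring
    show phiAux (v.1 + w.1) t = phiAux v.1 t + phiAux w.1 t
    simp only [phiAux]
    rw [e, hk, hl, Rat.num_intCast, Rat.num_intCast, Rat.num_intCast]
    push_cast
    ring

lemma card_cast_table :
    ∀ t s : Fin 6, ((PlaneS (sigma6 t) ∩ PlaneS s).card : ZMod 2) = if t = s then 1 else 0 := by
  decide

lemma ΦM_pvec (s : Fin 6) (h : pvec s ∈ dualLat BK KummerLat) :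
    ΦM ⟨pvec s, h⟩ = Pi.single s 1 := by
  funext t
  show phiAux (pvec s) t = _
  have e : (∑ a ∈ PlaneS (sigma6 t), 2 * pvec s a : ℚ)
      = (((PlaneS (sigma6 t) ∩ PlaneS s).card : ℤ) : ℚ) := by
    simp_rw [pvec_eq]
    rw [← Finset.mul_sum, sum_halfSum]
    push_cast
    ring
  simp only [phiAux]
  rw [e, Rat.num_intCast]
  rw [Pi.single_apply]
  push_cast
  rw [card_cast_table t s]

lemma plane_sum_int {w : VK} (hw : w ∈ KummerLat) (u : Fin 6) :
    ∃ k : ℤ, ∑ a ∈ PlaneS u, w a = (k:ℚ) := by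
  have hw' : w ∈ span ℤ (Set.range EK ∪
      { v | ∃ H : Finset F16, IsAffineHyperplane H ∧ v = halfSum H }) := hw
  clear hw
  induction hw' using Submodule.span_induction with
  | mem x hx =>
    rcases hx with ⟨b, rfl⟩ | ⟨H, hH, rfl⟩
    · simp only [EK]
      rw [Finset.sum_ite_eq' (PlaneS u) b (fun _ => (1:ℚ))]
      by_cases h : b ∈ PlaneS u
      · exact ⟨1, by simp [h]⟩
      · exact ⟨0, by simp [h]⟩
    · rw [sum_halfSum]
      obtain ⟨m, hm⟩ := even_card_hyp_inter u hH
      rw [Finset.inter_comm, hm]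
      exact ⟨m, by push_cast; ring⟩
  | zero => exact ⟨0, by simp⟩
  | add x y hx hy ihx ihy =>
    obtain ⟨k, hk⟩ := ihx; obtain ⟨l, hl⟩ := ihy
    refine ⟨k + l, ?_⟩
    have e : ∑ a ∈ PlaneS u, (x + y) a = (∑ a ∈ PlaneS u, x a) + ∑ a ∈ PlaneS u, y a := by
      rw [← Finset.sum_add_distrib]
      exact Finset.sum_congr rfl fun a _ => rfl
    rw [e, hk, hl]; push_cast; ring
  | smul n x hx ih =>
    obtain ⟨k, hk⟩ := ih
    refine ⟨n * k, ?_⟩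
    have : ∑ a ∈ PlaneS u, (n • x) a = (n:ℚ) * ∑ a ∈ PlaneS u, x a := by
      rw [Finset.mul_sum]
      exact Finset.sum_congr rfl fun a _ => by simp [zsmul_eq_mul]
    rw [this, hk]
    push_cast
    ring

lemma ΦM_ker {v : dualLat BK KummerLat} (hv : v.1 ∈ KummerLat) : ΦM v = 0 := by
  funext t
  show phiAux v.1 t = 0
  obtain ⟨k, hk⟩ := plane_sum_int hv (sigma6 t)
  have e : (∑ a ∈ PlaneS (sigma6 t), 2 * v.1 a : ℚ) = ((2 * k : ℤ) : ℚ) := by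
    push_cast
    rw [← Finset.mul_sum, hk]
  simp only [phiAux]
  rw [e, Rat.num_intCast]
  exact (ZMod.intCast_zmod_eq_zero_iff_dvd _ 2).2 ⟨k, rfl⟩

def Hyp (m : Fin 4) (c : ZMod 2) : Finset F16 := Finset.univ.filter fun a => a m = c

lemma Hyp_affine (m : Fin 4) (c : ZMod 2) : IsAffineHyperplane (Hyp m c) := by
  refine ⟨LinearMap.proj m, c, ?_, ?_⟩
  · intro h
    have h1 := congrArg (fun ψ : F16 →ₗ[ZMod 2] ZMod 2 => ψ (Pi.single m 1)) h
    simp [LinearMap.proj_apply] at h1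
  · intro a
    simp [Hyp, LinearMap.proj_apply]

def corrv (n : F16 → ℤ) : VK :=
  n (pt 0 0 0 0) • (halfSum (Hyp 0 0) + halfSum (Hyp 0 1)) +
  (n (pt 0 0 0 0) + n (pt 1 0 0 0)) • halfSum (Hyp 0 1) +
  (n (pt 0 0 0 0) + n (pt 0 1 0 0)) • halfSum (Hyp 1 1) +
  (n (pt 0 0 0 0) + n (pt 0 0 1 0)) • halfSum (Hyp 2 1) +
  (n (pt 0 0 0 0) + n (pt 0 0 0 1)) • halfSum (Hyp 3 1)

lemma corrv_mem (n : F16 → ℤ) : corrv n ∈ KummerLat := by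
  refine add_mem (add_mem (add_mem (add_mem (zsmul_mem (add_mem (halfSum_mem (Hyp_affine 0 0)) (halfSum_mem (Hyp_affine 0 1))) _) (zsmul_mem (halfSum_mem (Hyp_affine 0 1)) _)) (zsmul_mem (halfSum_mem (Hyp_affine 1 1)) _)) (zsmul_mem (halfSum_mem (Hyp_affine 2 1)) _)) (zsmul_mem (halfSum_mem (Hyp_affine 3 1)) _)

lemma corrv_apply (n : F16 → ℤ) (a : F16) :
    corrv n a = (n (pt 0 0 0 0) : ℚ) * 2⁻¹
      + (if a 0 = 1 then ((n (pt 0 0 0 0) + n (pt 1 0 0 0) : ℤ) : ℚ) * 2⁻¹ else 0)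
      + (if a 1 = 1 then ((n (pt 0 0 0 0) + n (pt 0 1 0 0) : ℤ) : ℚ) * 2⁻¹ else 0)
      + (if a 2 = 1 then ((n (pt 0 0 0 0) + n (pt 0 0 1 0) : ℤ) : ℚ) * 2⁻¹ else 0)
      + (if a 3 = 1 then ((n (pt 0 0 0 0) + n (pt 0 0 0 1) : ℤ) : ℚ) * 2⁻¹ else 0) := by
  have h01 : ((if a 0 = 0 then (2⁻¹:ℚ) else 0) + (if a 0 = 1 then (2⁻¹:ℚ) else 0)) = 2⁻¹ := by
    rcases (by decide : ∀ u : ZMod 2, u = 0 ∨ u = 1) (a 0) with h | h <;> rw [h] <;> norm_num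
  simp only [corrv, Pi.add_apply, Pi.smul_apply]
  simp only [zsmul_eq_mul, halfSum_apply, Hyp, Finset.mem_filter, Finset.mem_univ, true_and]
  rw [h01]
  simp only [mul_ite, mul_zero]
  try ring

lemma parityL_0 {N0000 N0001 N0010 N0011 N0100 N0101 N0110 N0111 N1000 N1001 N1010 N1011 N1100 N1101 N1110 N1111 : ℤ}
    (q01 : 2 ∣ N0000 + (N1000 + (N0100 + (N1100))))
    (q23 : 2 ∣ N0000 + (N0010 + (N0001 + (N0011))))
    (q02 : 2 ∣ N0000 + (N1000 + (N0010 + (N1010))))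
    (q13 : 2 ∣ N0000 + (N0100 + (N0001 + (N0101))))
    (q03 : 2 ∣ N0000 + (N1000 + (N0001 + (N1001))))
    (q12 : 2 ∣ N0000 + (N0100 + (N0010 + (N0110))))
    (r0 : 2 ∣ N0000 + (N0001 + (N0010 + (N0011 + (N0100 + (N0101 + (N0110 + (N0111))))))))
    (r1 : 2 ∣ N0000 + (N0001 + (N0010 + (N0011 + (N1000 + (N1001 + (N1010 + (N1011))))))))
    (r2 : 2 ∣ N0000 + (N0001 + (N0100 + (N0101 + (N1000 + (N1001 + (N1100 + (N1101))))))))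
    (r3 : 2 ∣ N0000 + (N0010 + (N0100 + (N0110 + (N1000 + (N1010 + (N1100 + (N1110))))))))
    (r0p : 2 ∣ N1000 + (N1001 + (N1010 + (N1011 + (N1100 + (N1101 + (N1110 + (N1111)))))))) :
    2 ∣ N0000 - (N0000) := by omega

lemma parityL_1 {N0000 N0001 N0010 N0011 N0100 N0101 N0110 N0111 N1000 N1001 N1010 N1011 N1100 N1101 N1110 N1111 : ℤ}
    (q01 : 2 ∣ N0000 + (N1000 + (N0100 + (N1100))))
    (q23 : 2 ∣ N0000 + (N0010 + (N0001 + (N0011))))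
    (q02 : 2 ∣ N0000 + (N1000 + (N0010 + (N1010))))
    (q13 : 2 ∣ N0000 + (N0100 + (N0001 + (N0101))))
    (q03 : 2 ∣ N0000 + (N1000 + (N0001 + (N1001))))
    (q12 : 2 ∣ N0000 + (N0100 + (N0010 + (N0110))))
    (r0 : 2 ∣ N0000 + (N0001 + (N0010 + (N0011 + (N0100 + (N0101 + (N0110 + (N0111))))))))
    (r1 : 2 ∣ N0000 + (N0001 + (N0010 + (N0011 + (N1000 + (N1001 + (N1010 + (N1011))))))))
    (r2 : 2 ∣ N0000 + (N0001 + (N0100 + (N0101 + (N1000 + (N1001 + (N1100 + (N1101))))))))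
    (r3 : 2 ∣ N0000 + (N0010 + (N0100 + (N0110 + (N1000 + (N1010 + (N1100 + (N1110))))))))
    (r0p : 2 ∣ N1000 + (N1001 + (N1010 + (N1011 + (N1100 + (N1101 + (N1110 + (N1111)))))))) :
    2 ∣ N0001 - (N0000 + (N0000 + N0001)) := by omega

lemma parityL_2 {N0000 N0001 N0010 N0011 N0100 N0101 N0110 N0111 N1000 N1001 N1010 N1011 N1100 N1101 N1110 N1111 : ℤ}
    (q01 : 2 ∣ N0000 + (N1000 + (N0100 + (N1100))))
    (q23 : 2 ∣ N0000 + (N0010 + (N0001 + (N0011))))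
    (q02 : 2 ∣ N0000 + (N1000 + (N0010 + (N1010))))
    (q13 : 2 ∣ N0000 + (N0100 + (N0001 + (N0101))))
    (q03 : 2 ∣ N0000 + (N1000 + (N0001 + (N1001))))
    (q12 : 2 ∣ N0000 + (N0100 + (N0010 + (N0110))))
    (r0 : 2 ∣ N0000 + (N0001 + (N0010 + (N0011 + (N0100 + (N0101 + (N0110 + (N0111))))))))
    (r1 : 2 ∣ N0000 + (N0001 + (N0010 + (N0011 + (N1000 + (N1001 + (N1010 + (N1011))))))))
    (r2 : 2 ∣ N0000 + (N0001 + (N0100 + (N0101 + (N1000 + (N1001 + (N1100 + (N1101))))))))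
    (r3 : 2 ∣ N0000 + (N0010 + (N0100 + (N0110 + (N1000 + (N1010 + (N1100 + (N1110))))))))
    (r0p : 2 ∣ N1000 + (N1001 + (N1010 + (N1011 + (N1100 + (N1101 + (N1110 + (N1111)))))))) :
    2 ∣ N0010 - (N0000 + (N0000 + N0010)) := by omega

lemma parityL_3 {N0000 N0001 N0010 N0011 N0100 N0101 N0110 N0111 N1000 N1001 N1010 N1011 N1100 N1101 N1110 N1111 : ℤ}
    (q01 : 2 ∣ N0000 + (N1000 + (N0100 + (N1100))))
    (q23 : 2 ∣ N0000 + (N0010 + (N0001 + (N0011))))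
    (q02 : 2 ∣ N0000 + (N1000 + (N0010 + (N1010))))
    (q13 : 2 ∣ N0000 + (N0100 + (N0001 + (N0101))))
    (q03 : 2 ∣ N0000 + (N1000 + (N0001 + (N1001))))
    (q12 : 2 ∣ N0000 + (N0100 + (N0010 + (N0110))))
    (r0 : 2 ∣ N0000 + (N0001 + (N0010 + (N0011 + (N0100 + (N0101 + (N0110 + (N0111))))))))
    (r1 : 2 ∣ N0000 + (N0001 + (N0010 + (N0011 + (N1000 + (N1001 + (N1010 + (N1011))))))))
    (r2 : 2 ∣ N0000 + (N0001 + (N0100 + (N0101 + (N1000 + (N1001 + (N1100 + (N1101))))))))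
    (r3 : 2 ∣ N0000 + (N0010 + (N0100 + (N0110 + (N1000 + (N1010 + (N1100 + (N1110))))))))
    (r0p : 2 ∣ N1000 + (N1001 + (N1010 + (N1011 + (N1100 + (N1101 + (N1110 + (N1111)))))))) :
    2 ∣ N0011 - (N0000 + (N0000 + N0010) + (N0000 + N0001)) := by omega

lemma parityL_4 {N0000 N0001 N0010 N0011 N0100 N0101 N0110 N0111 N1000 N1001 N1010 N1011 N1100 N1101 N1110 N1111 : ℤ}
    (q01 : 2 ∣ N0000 + (N1000 + (N0100 + (N1100))))
    (q23 : 2 ∣ N0000 + (N0010 + (N0001 + (N0011))))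
    (q02 : 2 ∣ N0000 + (N1000 + (N0010 + (N1010))))
    (q13 : 2 ∣ N0000 + (N0100 + (N0001 + (N0101))))
    (q03 : 2 ∣ N0000 + (N1000 + (N0001 + (N1001))))
    (q12 : 2 ∣ N0000 + (N0100 + (N0010 + (N0110))))
    (r0 : 2 ∣ N0000 + (N0001 + (N0010 + (N0011 + (N0100 + (N0101 + (N0110 + (N0111))))))))
    (r1 : 2 ∣ N0000 + (N0001 + (N0010 + (N0011 + (N1000 + (N1001 + (N1010 + (N1011))))))))
    (r2 : 2 ∣ N0000 + (N0001 + (N0100 + (N0101 + (N1000 + (N1001 + (N1100 + (N1101))))))))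
    (r3 : 2 ∣ N0000 + (N0010 + (N0100 + (N0110 + (N1000 + (N1010 + (N1100 + (N1110))))))))
    (r0p : 2 ∣ N1000 + (N1001 + (N1010 + (N1011 + (N1100 + (N1101 + (N1110 + (N1111)))))))) :
    2 ∣ N0100 - (N0000 + (N0000 + N0100)) := by omega

lemma parityL_5 {N0000 N0001 N0010 N0011 N0100 N0101 N0110 N0111 N1000 N1001 N1010 N1011 N1100 N1101 N1110 N1111 : ℤ}
    (q01 : 2 ∣ N0000 + (N1000 + (N0100 + (N1100))))
    (q23 : 2 ∣ N0000 + (N0010 + (N0001 + (N0011))))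
    (q02 : 2 ∣ N0000 + (N1000 + (N0010 + (N1010))))
    (q13 : 2 ∣ N0000 + (N0100 + (N0001 + (N0101))))
    (q03 : 2 ∣ N0000 + (N1000 + (N0001 + (N1001))))
    (q12 : 2 ∣ N0000 + (N0100 + (N0010 + (N0110))))
    (r0 : 2 ∣ N0000 + (N0001 + (N0010 + (N0011 + (N0100 + (N0101 + (N0110 + (N0111))))))))
    (r1 : 2 ∣ N0000 + (N0001 + (N0010 + (N0011 + (N1000 + (N1001 + (N1010 + (N1011))))))))
    (r2 : 2 ∣ N0000 + (N0001 + (N0100 + (N0101 + (N1000 + (N1001 + (N1100 + (N1101))))))))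
    (r3 : 2 ∣ N0000 + (N0010 + (N0100 + (N0110 + (N1000 + (N1010 + (N1100 + (N1110))))))))
    (r0p : 2 ∣ N1000 + (N1001 + (N1010 + (N1011 + (N1100 + (N1101 + (N1110 + (N1111)))))))) :
    2 ∣ N0101 - (N0000 + (N0000 + N0100) + (N0000 + N0001)) := by omega

lemma parityL_6 {N0000 N0001 N0010 N0011 N0100 N0101 N0110 N0111 N1000 N1001 N1010 N1011 N1100 N1101 N1110 N1111 : ℤ}
    (q01 : 2 ∣ N0000 + (N1000 + (N0100 + (N1100))))
    (q23 : 2 ∣ N0000 + (N0010 + (N0001 + (N0011))))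
    (q02 : 2 ∣ N0000 + (N1000 + (N0010 + (N1010))))
    (q13 : 2 ∣ N0000 + (N0100 + (N0001 + (N0101))))
    (q03 : 2 ∣ N0000 + (N1000 + (N0001 + (N1001))))
    (q12 : 2 ∣ N0000 + (N0100 + (N0010 + (N0110))))
    (r0 : 2 ∣ N0000 + (N0001 + (N0010 + (N0011 + (N0100 + (N0101 + (N0110 + (N0111))))))))
    (r1 : 2 ∣ N0000 + (N0001 + (N0010 + (N0011 + (N1000 + (N1001 + (N1010 + (N1011))))))))
    (r2 : 2 ∣ N0000 + (N0001 + (N0100 + (N0101 + (N1000 + (N1001 + (N1100 + (N1101))))))))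
    (r3 : 2 ∣ N0000 + (N0010 + (N0100 + (N0110 + (N1000 + (N1010 + (N1100 + (N1110))))))))
    (r0p : 2 ∣ N1000 + (N1001 + (N1010 + (N1011 + (N1100 + (N1101 + (N1110 + (N1111)))))))) :
    2 ∣ N0110 - (N0000 + (N0000 + N0100) + (N0000 + N0010)) := by omega

lemma parityL_7 {N0000 N0001 N0010 N0011 N0100 N0101 N0110 N0111 N1000 N1001 N1010 N1011 N1100 N1101 N1110 N1111 : ℤ}
    (q01 : 2 ∣ N0000 + (N1000 + (N0100 + (N1100))))
    (q23 : 2 ∣ N0000 + (N0010 + (N0001 + (N0011))))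
    (q02 : 2 ∣ N0000 + (N1000 + (N0010 + (N1010))))
    (q13 : 2 ∣ N0000 + (N0100 + (N0001 + (N0101))))
    (q03 : 2 ∣ N0000 + (N1000 + (N0001 + (N1001))))
    (q12 : 2 ∣ N0000 + (N0100 + (N0010 + (N0110))))
    (r0 : 2 ∣ N0000 + (N0001 + (N0010 + (N0011 + (N0100 + (N0101 + (N0110 + (N0111))))))))
    (r1 : 2 ∣ N0000 + (N0001 + (N0010 + (N0011 + (N1000 + (N1001 + (N1010 + (N1011))))))))
    (r2 : 2 ∣ N0000 + (N0001 + (N0100 + (N0101 + (N1000 + (N1001 + (N1100 + (N1101))))))))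
    (r3 : 2 ∣ N0000 + (N0010 + (N0100 + (N0110 + (N1000 + (N1010 + (N1100 + (N1110))))))))
    (r0p : 2 ∣ N1000 + (N1001 + (N1010 + (N1011 + (N1100 + (N1101 + (N1110 + (N1111)))))))) :
    2 ∣ N0111 - (N0000 + (N0000 + N0100) + (N0000 + N0010) + (N0000 + N0001)) := by omega

lemma parityL_8 {N0000 N0001 N0010 N0011 N0100 N0101 N0110 N0111 N1000 N1001 N1010 N1011 N1100 N1101 N1110 N1111 : ℤ}
    (q01 : 2 ∣ N0000 + (N1000 + (N0100 + (N1100))))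
    (q23 : 2 ∣ N0000 + (N0010 + (N0001 + (N0011))))
    (q02 : 2 ∣ N0000 + (N1000 + (N0010 + (N1010))))
    (q13 : 2 ∣ N0000 + (N0100 + (N0001 + (N0101))))
    (q03 : 2 ∣ N0000 + (N1000 + (N0001 + (N1001))))
    (q12 : 2 ∣ N0000 + (N0100 + (N0010 + (N0110))))
    (r0 : 2 ∣ N0000 + (N0001 + (N0010 + (N0011 + (N0100 + (N0101 + (N0110 + (N0111))))))))
    (r1 : 2 ∣ N0000 + (N0001 + (N0010 + (N0011 + (N1000 + (N1001 + (N1010 + (N1011))))))))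
    (r2 : 2 ∣ N0000 + (N0001 + (N0100 + (N0101 + (N1000 + (N1001 + (N1100 + (N1101))))))))
    (r3 : 2 ∣ N0000 + (N0010 + (N0100 + (N0110 + (N1000 + (N1010 + (N1100 + (N1110))))))))
    (r0p : 2 ∣ N1000 + (N1001 + (N1010 + (N1011 + (N1100 + (N1101 + (N1110 + (N1111)))))))) :
    2 ∣ N1000 - (N0000 + (N0000 + N1000)) := by omega

lemma parityL_9 {N0000 N0001 N0010 N0011 N0100 N0101 N0110 N0111 N1000 N1001 N1010 N1011 N1100 N1101 N1110 N1111 : ℤ}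
    (q01 : 2 ∣ N0000 + (N1000 + (N0100 + (N1100))))
    (q23 : 2 ∣ N0000 + (N0010 + (N0001 + (N0011))))
    (q02 : 2 ∣ N0000 + (N1000 + (N0010 + (N1010))))
    (q13 : 2 ∣ N0000 + (N0100 + (N0001 + (N0101))))
    (q03 : 2 ∣ N0000 + (N1000 + (N0001 + (N1001))))
    (q12 : 2 ∣ N0000 + (N0100 + (N0010 + (N0110))))
    (r0 : 2 ∣ N0000 + (N0001 + (N0010 + (N0011 + (N0100 + (N0101 + (N0110 + (N0111))))))))
    (r1 : 2 ∣ N0000 + (N0001 + (N0010 + (N0011 + (N1000 + (N1001 + (N1010 + (N1011))))))))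
    (r2 : 2 ∣ N0000 + (N0001 + (N0100 + (N0101 + (N1000 + (N1001 + (N1100 + (N1101))))))))
    (r3 : 2 ∣ N0000 + (N0010 + (N0100 + (N0110 + (N1000 + (N1010 + (N1100 + (N1110))))))))
    (r0p : 2 ∣ N1000 + (N1001 + (N1010 + (N1011 + (N1100 + (N1101 + (N1110 + (N1111)))))))) :
    2 ∣ N1001 - (N0000 + (N0000 + N1000) + (N0000 + N0001)) := by omega

lemma parityL_10 {N0000 N0001 N0010 N0011 N0100 N0101 N0110 N0111 N1000 N1001 N1010 N1011 N1100 N1101 N1110 N1111 : ℤ}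
    (q01 : 2 ∣ N0000 + (N1000 + (N0100 + (N1100))))
    (q23 : 2 ∣ N0000 + (N0010 + (N0001 + (N0011))))
    (q02 : 2 ∣ N0000 + (N1000 + (N0010 + (N1010))))
    (q13 : 2 ∣ N0000 + (N0100 + (N0001 + (N0101))))
    (q03 : 2 ∣ N0000 + (N1000 + (N0001 + (N1001))))
    (q12 : 2 ∣ N0000 + (N0100 + (N0010 + (N0110))))
    (r0 : 2 ∣ N0000 + (N0001 + (N0010 + (N0011 + (N0100 + (N0101 + (N0110 + (N0111))))))))
    (r1 : 2 ∣ N0000 + (N0001 + (N0010 + (N0011 + (N1000 + (N1001 + (N1010 + (N1011))))))))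
    (r2 : 2 ∣ N0000 + (N0001 + (N0100 + (N0101 + (N1000 + (N1001 + (N1100 + (N1101))))))))
    (r3 : 2 ∣ N0000 + (N0010 + (N0100 + (N0110 + (N1000 + (N1010 + (N1100 + (N1110))))))))
    (r0p : 2 ∣ N1000 + (N1001 + (N1010 + (N1011 + (N1100 + (N1101 + (N1110 + (N1111)))))))) :
    2 ∣ N1010 - (N0000 + (N0000 + N1000) + (N0000 + N0010)) := by omega

lemma parityL_11 {N0000 N0001 N0010 N0011 N0100 N0101 N0110 N0111 N1000 N1001 N1010 N1011 N1100 N1101 N1110 N1111 : ℤ}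
    (q01 : 2 ∣ N0000 + (N1000 + (N0100 + (N1100))))
    (q23 : 2 ∣ N0000 + (N0010 + (N0001 + (N0011))))
    (q02 : 2 ∣ N0000 + (N1000 + (N0010 + (N1010))))
    (q13 : 2 ∣ N0000 + (N0100 + (N0001 + (N0101))))
    (q03 : 2 ∣ N0000 + (N1000 + (N0001 + (N1001))))
    (q12 : 2 ∣ N0000 + (N0100 + (N0010 + (N0110))))
    (r0 : 2 ∣ N0000 + (N0001 + (N0010 + (N0011 + (N0100 + (N0101 + (N0110 + (N0111))))))))
    (r1 : 2 ∣ N0000 + (N0001 + (N0010 + (N0011 + (N1000 + (N1001 + (N1010 + (N1011))))))))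
    (r2 : 2 ∣ N0000 + (N0001 + (N0100 + (N0101 + (N1000 + (N1001 + (N1100 + (N1101))))))))
    (r3 : 2 ∣ N0000 + (N0010 + (N0100 + (N0110 + (N1000 + (N1010 + (N1100 + (N1110))))))))
    (r0p : 2 ∣ N1000 + (N1001 + (N1010 + (N1011 + (N1100 + (N1101 + (N1110 + (N1111)))))))) :
    2 ∣ N1011 - (N0000 + (N0000 + N1000) + (N0000 + N0010) + (N0000 + N0001)) := by omega

lemma parityL_12 {N0000 N0001 N0010 N0011 N0100 N0101 N0110 N0111 N1000 N1001 N1010 N1011 N1100 N1101 N1110 N1111 : ℤ}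
    (q01 : 2 ∣ N0000 + (N1000 + (N0100 + (N1100))))
    (q23 : 2 ∣ N0000 + (N0010 + (N0001 + (N0011))))
    (q02 : 2 ∣ N0000 + (N1000 + (N0010 + (N1010))))
    (q13 : 2 ∣ N0000 + (N0100 + (N0001 + (N0101))))
    (q03 : 2 ∣ N0000 + (N1000 + (N0001 + (N1001))))
    (q12 : 2 ∣ N0000 + (N0100 + (N0010 + (N0110))))
    (r0 : 2 ∣ N0000 + (N0001 + (N0010 + (N0011 + (N0100 + (N0101 + (N0110 + (N0111))))))))
    (r1 : 2 ∣ N0000 + (N0001 + (N0010 + (N0011 + (N1000 + (N1001 + (N1010 + (N1011))))))))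
    (r2 : 2 ∣ N0000 + (N0001 + (N0100 + (N0101 + (N1000 + (N1001 + (N1100 + (N1101))))))))
    (r3 : 2 ∣ N0000 + (N0010 + (N0100 + (N0110 + (N1000 + (N1010 + (N1100 + (N1110))))))))
    (r0p : 2 ∣ N1000 + (N1001 + (N1010 + (N1011 + (N1100 + (N1101 + (N1110 + (N1111)))))))) :
    2 ∣ N1100 - (N0000 + (N0000 + N1000) + (N0000 + N0100)) := by omega

lemma parityL_13 {N0000 N0001 N0010 N0011 N0100 N0101 N0110 N0111 N1000 N1001 N1010 N1011 N1100 N1101 N1110 N1111 : ℤ}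
    (q01 : 2 ∣ N0000 + (N1000 + (N0100 + (N1100))))
    (q23 : 2 ∣ N0000 + (N0010 + (N0001 + (N0011))))
    (q02 : 2 ∣ N0000 + (N1000 + (N0010 + (N1010))))
    (q13 : 2 ∣ N0000 + (N0100 + (N0001 + (N0101))))
    (q03 : 2 ∣ N0000 + (N1000 + (N0001 + (N1001))))
    (q12 : 2 ∣ N0000 + (N0100 + (N0010 + (N0110))))
    (r0 : 2 ∣ N0000 + (N0001 + (N0010 + (N0011 + (N0100 + (N0101 + (N0110 + (N0111))))))))
    (r1 : 2 ∣ N0000 + (N0001 + (N0010 + (N0011 + (N1000 + (N1001 + (N1010 + (N1011))))))))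
    (r2 : 2 ∣ N0000 + (N0001 + (N0100 + (N0101 + (N1000 + (N1001 + (N1100 + (N1101))))))))
    (r3 : 2 ∣ N0000 + (N0010 + (N0100 + (N0110 + (N1000 + (N1010 + (N1100 + (N1110))))))))
    (r0p : 2 ∣ N1000 + (N1001 + (N1010 + (N1011 + (N1100 + (N1101 + (N1110 + (N1111)))))))) :
    2 ∣ N1101 - (N0000 + (N0000 + N1000) + (N0000 + N0100) + (N0000 + N0001)) := by omega

lemma parityL_14 {N0000 N0001 N0010 N0011 N0100 N0101 N0110 N0111 N1000 N1001 N1010 N1011 N1100 N1101 N1110 N1111 : ℤ}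
    (q01 : 2 ∣ N0000 + (N1000 + (N0100 + (N1100))))
    (q23 : 2 ∣ N0000 + (N0010 + (N0001 + (N0011))))
    (q02 : 2 ∣ N0000 + (N1000 + (N0010 + (N1010))))
    (q13 : 2 ∣ N0000 + (N0100 + (N0001 + (N0101))))
    (q03 : 2 ∣ N0000 + (N1000 + (N0001 + (N1001))))
    (q12 : 2 ∣ N0000 + (N0100 + (N0010 + (N0110))))
    (r0 : 2 ∣ N0000 + (N0001 + (N0010 + (N0011 + (N0100 + (N0101 + (N0110 + (N0111))))))))
    (r1 : 2 ∣ N0000 + (N0001 + (N0010 + (N0011 + (N1000 + (N1001 + (N1010 + (N1011))))))))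
    (r2 : 2 ∣ N0000 + (N0001 + (N0100 + (N0101 + (N1000 + (N1001 + (N1100 + (N1101))))))))
    (r3 : 2 ∣ N0000 + (N0010 + (N0100 + (N0110 + (N1000 + (N1010 + (N1100 + (N1110))))))))
    (r0p : 2 ∣ N1000 + (N1001 + (N1010 + (N1011 + (N1100 + (N1101 + (N1110 + (N1111)))))))) :
    2 ∣ N1110 - (N0000 + (N0000 + N1000) + (N0000 + N0100) + (N0000 + N0010)) := by omega

lemma parityL_15 {N0000 N0001 N0010 N0011 N0100 N0101 N0110 N0111 N1000 N1001 N1010 N1011 N1100 N1101 N1110 N1111 : ℤ}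
    (q01 : 2 ∣ N0000 + (N1000 + (N0100 + (N1100))))
    (q23 : 2 ∣ N0000 + (N0010 + (N0001 + (N0011))))
    (q02 : 2 ∣ N0000 + (N1000 + (N0010 + (N1010))))
    (q13 : 2 ∣ N0000 + (N0100 + (N0001 + (N0101))))
    (q03 : 2 ∣ N0000 + (N1000 + (N0001 + (N1001))))
    (q12 : 2 ∣ N0000 + (N0100 + (N0010 + (N0110))))
    (r0 : 2 ∣ N0000 + (N0001 + (N0010 + (N0011 + (N0100 + (N0101 + (N0110 + (N0111))))))))
    (r1 : 2 ∣ N0000 + (N0001 + (N0010 + (N0011 + (N1000 + (N1001 + (N1010 + (N1011))))))))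
    (r2 : 2 ∣ N0000 + (N0001 + (N0100 + (N0101 + (N1000 + (N1001 + (N1100 + (N1101))))))))
    (r3 : 2 ∣ N0000 + (N0010 + (N0100 + (N0110 + (N1000 + (N1010 + (N1100 + (N1110))))))))
    (r0p : 2 ∣ N1000 + (N1001 + (N1010 + (N1011 + (N1100 + (N1101 + (N1110 + (N1111)))))))) :
    2 ∣ N1111 - (N0000 + (N0000 + N1000) + (N0000 + N0100) + (N0000 + N0010) + (N0000 + N0001)) := by omega

lemma ker_le_lat {v : VK} (hv : v ∈ dualLat BK KummerLat)
    (h6 : ∀ t : Fin 6, phiAux v t = 0) : v ∈ KummerLat := by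
  choose n hn using coord_int hv
  have hP : ∀ s : Fin 6, (2:ℤ) ∣ ∑ a ∈ PlaneS s, n a := by
    intro s
    have h : (((∑ a ∈ PlaneS (sigma6 (sigma6 s)), 2 * v a : ℚ).num : ℤ) : ZMod 2) = 0 :=
      h6 (sigma6 s)
    have hts : sigma6 (sigma6 s) = s := by fin_cases s <;> rfl
    rw [hts] at h
    have e : (∑ a ∈ PlaneS s, 2 * v a : ℚ) = ((∑ a ∈ PlaneS s, n a : ℤ) : ℚ) := by
      push_cast
      exact Finset.sum_congr rfl fun a _ => hn a
    rw [e, Rat.num_intCast] at h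
    exact (ZMod.intCast_zmod_eq_zero_iff_dvd _ 2).1 h
  have hQ : ∀ (m : Fin 4) (c : ZMod 2), (2:ℤ) ∣ ∑ a ∈ Hyp m c, n a := by
    intro m c
    obtain ⟨k, hk⟩ := hyp_sum_int hv (Hyp_affine m c)
    refine ⟨k, ?_⟩
    have e : ((∑ a ∈ Hyp m c, n a : ℤ) : ℚ) = ((2 * k : ℤ) : ℚ) := by
      push_cast
      calc (∑ a ∈ Hyp m c, (n a : ℚ)) = ∑ a ∈ Hyp m c, 2 * v a :=
            Finset.sum_congr rfl fun a _ => (hn a).symm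
        _ = 2 * ∑ a ∈ Hyp m c, v a := by rw [Finset.mul_sum]
        _ = 2 * k := by rw [hk]
    exact_mod_cast e
  have q01 := hP 0
  rw [show PlaneS 0 = ({pt 0 0 0 0, pt 1 0 0 0, pt 0 1 0 0, pt 1 1 0 0} : Finset F16) from by decide,
    Finset.sum_insert (by decide), Finset.sum_insert (by decide), Finset.sum_insert (by decide),
    Finset.sum_singleton] at q01
  have q23 := hP 1
  rw [show PlaneS 1 = ({pt 0 0 0 0, pt 0 0 1 0, pt 0 0 0 1, pt 0 0 1 1} : Finset F16) from by decide,
    Finset.sum_insert (by decide), Finset.sum_insert (by decide), Finset.sum_insert (by decide),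
    Finset.sum_singleton] at q23
  have q02 := hP 2
  rw [show PlaneS 2 = ({pt 0 0 0 0, pt 1 0 0 0, pt 0 0 1 0, pt 1 0 1 0} : Finset F16) from by decide,
    Finset.sum_insert (by decide), Finset.sum_insert (by decide), Finset.sum_insert (by decide),
    Finset.sum_singleton] at q02
  have q13 := hP 3
  rw [show PlaneS 3 = ({pt 0 0 0 0, pt 0 1 0 0, pt 0 0 0 1, pt 0 1 0 1} : Finset F16) from by decide,
    Finset.sum_insert (by decide), Finset.sum_insert (by decide), Finset.sum_insert (by decide),
    Finset.sum_singleton] at q13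
  have q03 := hP 4
  rw [show PlaneS 4 = ({pt 0 0 0 0, pt 1 0 0 0, pt 0 0 0 1, pt 1 0 0 1} : Finset F16) from by decide,
    Finset.sum_insert (by decide), Finset.sum_insert (by decide), Finset.sum_insert (by decide),
    Finset.sum_singleton] at q03
  have q12 := hP 5
  rw [show PlaneS 5 = ({pt 0 0 0 0, pt 0 1 0 0, pt 0 0 1 0, pt 0 1 1 0} : Finset F16) from by decide,
    Finset.sum_insert (by decide), Finset.sum_insert (by decide), Finset.sum_insert (by decide),
    Finset.sum_singleton] at q12
  have r0 := hQ 0 0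
  rw [show Hyp 0 0 = ({pt 0 0 0 0, pt 0 0 0 1, pt 0 0 1 0, pt 0 0 1 1, pt 0 1 0 0, pt 0 1 0 1, pt 0 1 1 0, pt 0 1 1 1} : Finset F16) from by decide,
    Finset.sum_insert (by decide), Finset.sum_insert (by decide), Finset.sum_insert (by decide), Finset.sum_insert (by decide), Finset.sum_insert (by decide), Finset.sum_insert (by decide), Finset.sum_insert (by decide), Finset.sum_singleton] at r0
  have r1 := hQ 1 0
  rw [show Hyp 1 0 = ({pt 0 0 0 0, pt 0 0 0 1, pt 0 0 1 0, pt 0 0 1 1, pt 1 0 0 0, pt 1 0 0 1, pt 1 0 1 0, pt 1 0 1 1} : Finset F16) from by decide,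
    Finset.sum_insert (by decide), Finset.sum_insert (by decide), Finset.sum_insert (by decide), Finset.sum_insert (by decide), Finset.sum_insert (by decide), Finset.sum_insert (by decide), Finset.sum_insert (by decide), Finset.sum_singleton] at r1
  have r2 := hQ 2 0
  rw [show Hyp 2 0 = ({pt 0 0 0 0, pt 0 0 0 1, pt 0 1 0 0, pt 0 1 0 1, pt 1 0 0 0, pt 1 0 0 1, pt 1 1 0 0, pt 1 1 0 1} : Finset F16) from by decide,
    Finset.sum_insert (by decide), Finset.sum_insert (by decide), Finset.sum_insert (by decide), Finset.sum_insert (by decide), Finset.sum_insert (by decide), Finset.sum_insert (by decide), Finset.sum_insert (by decide), Finset.sum_singleton] at r2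
  have r3 := hQ 3 0
  rw [show Hyp 3 0 = ({pt 0 0 0 0, pt 0 0 1 0, pt 0 1 0 0, pt 0 1 1 0, pt 1 0 0 0, pt 1 0 1 0, pt 1 1 0 0, pt 1 1 1 0} : Finset F16) from by decide,
    Finset.sum_insert (by decide), Finset.sum_insert (by decide), Finset.sum_insert (by decide), Finset.sum_insert (by decide), Finset.sum_insert (by decide), Finset.sum_insert (by decide), Finset.sum_insert (by decide), Finset.sum_singleton] at r3
  have r0p := hQ 0 1
  rw [show Hyp 0 1 = ({pt 1 0 0 0, pt 1 0 0 1, pt 1 0 1 0, pt 1 0 1 1, pt 1 1 0 0, pt 1 1 0 1, pt 1 1 1 0, pt 1 1 1 1} : Finset F16) from by decide,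
    Finset.sum_insert (by decide), Finset.sum_insert (by decide), Finset.sum_insert (by decide), Finset.sum_insert (by decide), Finset.sum_insert (by decide), Finset.sum_insert (by decide), Finset.sum_insert (by decide), Finset.sum_singleton] at r0p
  suffices hsub : v - corrv n ∈ KummerLat by
    have h2 := add_mem hsub (corrv_mem n)
    simpa using h2
  apply int_coords_mem
  intro a
  have hval : ∀ (x y z w : ZMod 2) (D : ℤ), corrv n (pt x y z w) = (D:ℚ) * 2⁻¹ →
      2 ∣ (n (pt x y z w) - D) → ∃ k : ℤ, (v - corrv n) (pt x y z w) = (k:ℚ) := by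
    intro x y z w D hD hdvd
    obtain ⟨K, hK⟩ := hdvd
    refine ⟨K, ?_⟩
    have hna := hn (pt x y z w)
    have hKQ : (n (pt x y z w) : ℚ) - (D:ℚ) = 2 * (K:ℚ) := by exact_mod_cast congrArg (Int.cast : ℤ → ℚ) hK
    show v (pt x y z w) - corrv n (pt x y z w) = (K:ℚ)
    rw [hD]
    linarith
  obtain ⟨x, y, z, w, rfl⟩ : ∃ x y z w, a = pt x y z w :=
    ⟨a 0, a 1, a 2, a 3, by funext k; fin_cases k <;> rfl⟩
  have hbit : ∀ u : ZMod 2, u = 0 ∨ u = 1 := by decide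
  rcases hbit x with rfl | rfl <;> rcases hbit y with rfl | rfl <;>
    rcases hbit z with rfl | rfl <;> rcases hbit w with rfl | rfl
  · exact hval 0 0 0 0 (n (pt 0 0 0 0))
      (by rw [corrv_apply, if_neg (by decide : ¬ (pt 0 0 0 0) 0 = 1), if_neg (by decide : ¬ (pt 0 0 0 0) 1 = 1), if_neg (by decide : ¬ (pt 0 0 0 0) 2 = 1), if_neg (by decide : ¬ (pt 0 0 0 0) 3 = 1)]; push_cast; ring)
      (parityL_0 q01 q23 q02 q13 q03 q12 r0 r1 r2 r3 r0p)
  · exact hval 0 0 0 1 (n (pt 0 0 0 0) + (n (pt 0 0 0 0) + n (pt 0 0 0 1)))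
      (by rw [corrv_apply, if_neg (by decide : ¬ (pt 0 0 0 1) 0 = 1), if_neg (by decide : ¬ (pt 0 0 0 1) 1 = 1), if_neg (by decide : ¬ (pt 0 0 0 1) 2 = 1), if_pos (by decide : (pt 0 0 0 1) 3 = 1)]; push_cast; ring)
      (parityL_1 q01 q23 q02 q13 q03 q12 r0 r1 r2 r3 r0p)
  · exact hval 0 0 1 0 (n (pt 0 0 0 0) + (n (pt 0 0 0 0) + n (pt 0 0 1 0)))
      (by rw [corrv_apply, if_neg (by decide : ¬ (pt 0 0 1 0) 0 = 1), if_neg (by decide : ¬ (pt 0 0 1 0) 1 = 1), if_pos (by decide : (pt 0 0 1 0) 2 = 1), if_neg (by decide : ¬ (pt 0 0 1 0) 3 = 1)]; push_cast; ring)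
      (parityL_2 q01 q23 q02 q13 q03 q12 r0 r1 r2 r3 r0p)
  · exact hval 0 0 1 1 (n (pt 0 0 0 0) + (n (pt 0 0 0 0) + n (pt 0 0 1 0)) + (n (pt 0 0 0 0) + n (pt 0 0 0 1)))
      (by rw [corrv_apply, if_neg (by decide : ¬ (pt 0 0 1 1) 0 = 1), if_neg (by decide : ¬ (pt 0 0 1 1) 1 = 1), if_pos (by decide : (pt 0 0 1 1) 2 = 1), if_pos (by decide : (pt 0 0 1 1) 3 = 1)]; push_cast; ring)
      (parityL_3 q01 q23 q02 q13 q03 q12 r0 r1 r2 r3 r0p)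
  · exact hval 0 1 0 0 (n (pt 0 0 0 0) + (n (pt 0 0 0 0) + n (pt 0 1 0 0)))
      (by rw [corrv_apply, if_neg (by decide : ¬ (pt 0 1 0 0) 0 = 1), if_pos (by decide : (pt 0 1 0 0) 1 = 1), if_neg (by decide : ¬ (pt 0 1 0 0) 2 = 1), if_neg (by decide : ¬ (pt 0 1 0 0) 3 = 1)]; push_cast; ring)
      (parityL_4 q01 q23 q02 q13 q03 q12 r0 r1 r2 r3 r0p)
  · exact hval 0 1 0 1 (n (pt 0 0 0 0) + (n (pt 0 0 0 0) + n (pt 0 1 0 0)) + (n (pt 0 0 0 0) + n (pt 0 0 0 1)))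
      (by rw [corrv_apply, if_neg (by decide : ¬ (pt 0 1 0 1) 0 = 1), if_pos (by decide : (pt 0 1 0 1) 1 = 1), if_neg (by decide : ¬ (pt 0 1 0 1) 2 = 1), if_pos (by decide : (pt 0 1 0 1) 3 = 1)]; push_cast; ring)
      (parityL_5 q01 q23 q02 q13 q03 q12 r0 r1 r2 r3 r0p)
  · exact hval 0 1 1 0 (n (pt 0 0 0 0) + (n (pt 0 0 0 0) + n (pt 0 1 0 0)) + (n (pt 0 0 0 0) + n (pt 0 0 1 0)))
      (by rw [corrv_apply, if_neg (by decide : ¬ (pt 0 1 1 0) 0 = 1), if_pos (by decide : (pt 0 1 1 0) 1 = 1), if_pos (by decide : (pt 0 1 1 0) 2 = 1), if_neg (by decide : ¬ (pt 0 1 1 0) 3 = 1)]; push_cast; ring)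
      (parityL_6 q01 q23 q02 q13 q03 q12 r0 r1 r2 r3 r0p)
  · exact hval 0 1 1 1 (n (pt 0 0 0 0) + (n (pt 0 0 0 0) + n (pt 0 1 0 0)) + (n (pt 0 0 0 0) + n (pt 0 0 1 0)) + (n (pt 0 0 0 0) + n (pt 0 0 0 1)))
      (by rw [corrv_apply, if_neg (by decide : ¬ (pt 0 1 1 1) 0 = 1), if_pos (by decide : (pt 0 1 1 1) 1 = 1), if_pos (by decide : (pt 0 1 1 1) 2 = 1), if_pos (by decide : (pt 0 1 1 1) 3 = 1)]; push_cast; ring)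
      (parityL_7 q01 q23 q02 q13 q03 q12 r0 r1 r2 r3 r0p)
  · exact hval 1 0 0 0 (n (pt 0 0 0 0) + (n (pt 0 0 0 0) + n (pt 1 0 0 0)))
      (by rw [corrv_apply, if_pos (by decide : (pt 1 0 0 0) 0 = 1), if_neg (by decide : ¬ (pt 1 0 0 0) 1 = 1), if_neg (by decide : ¬ (pt 1 0 0 0) 2 = 1), if_neg (by decide : ¬ (pt 1 0 0 0) 3 = 1)]; push_cast; ring)
      (parityL_8 q01 q23 q02 q13 q03 q12 r0 r1 r2 r3 r0p)
  · exact hval 1 0 0 1 (n (pt 0 0 0 0) + (n (pt 0 0 0 0) + n (pt 1 0 0 0)) + (n (pt 0 0 0 0) + n (pt 0 0 0 1)))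
      (by rw [corrv_apply, if_pos (by decide : (pt 1 0 0 1) 0 = 1), if_neg (by decide : ¬ (pt 1 0 0 1) 1 = 1), if_neg (by decide : ¬ (pt 1 0 0 1) 2 = 1), if_pos (by decide : (pt 1 0 0 1) 3 = 1)]; push_cast; ring)
      (parityL_9 q01 q23 q02 q13 q03 q12 r0 r1 r2 r3 r0p)
  · exact hval 1 0 1 0 (n (pt 0 0 0 0) + (n (pt 0 0 0 0) + n (pt 1 0 0 0)) + (n (pt 0 0 0 0) + n (pt 0 0 1 0)))
      (by rw [corrv_apply, if_pos (by decide : (pt 1 0 1 0) 0 = 1), if_neg (by decide : ¬ (pt 1 0 1 0) 1 = 1), if_pos (by decide : (pt 1 0 1 0) 2 = 1), if_neg (by decide : ¬ (pt 1 0 1 0) 3 = 1)]; push_cast; ring)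
      (parityL_10 q01 q23 q02 q13 q03 q12 r0 r1 r2 r3 r0p)
  · exact hval 1 0 1 1 (n (pt 0 0 0 0) + (n (pt 0 0 0 0) + n (pt 1 0 0 0)) + (n (pt 0 0 0 0) + n (pt 0 0 1 0)) + (n (pt 0 0 0 0) + n (pt 0 0 0 1)))
      (by rw [corrv_apply, if_pos (by decide : (pt 1 0 1 1) 0 = 1), if_neg (by decide : ¬ (pt 1 0 1 1) 1 = 1), if_pos (by decide : (pt 1 0 1 1) 2 = 1), if_pos (by decide : (pt 1 0 1 1) 3 = 1)]; push_cast; ring)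
      (parityL_11 q01 q23 q02 q13 q03 q12 r0 r1 r2 r3 r0p)
  · exact hval 1 1 0 0 (n (pt 0 0 0 0) + (n (pt 0 0 0 0) + n (pt 1 0 0 0)) + (n (pt 0 0 0 0) + n (pt 0 1 0 0)))
      (by rw [corrv_apply, if_pos (by decide : (pt 1 1 0 0) 0 = 1), if_pos (by decide : (pt 1 1 0 0) 1 = 1), if_neg (by decide : ¬ (pt 1 1 0 0) 2 = 1), if_neg (by decide : ¬ (pt 1 1 0 0) 3 = 1)]; push_cast; ring)
      (parityL_12 q01 q23 q02 q13 q03 q12 r0 r1 r2 r3 r0p)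
  · exact hval 1 1 0 1 (n (pt 0 0 0 0) + (n (pt 0 0 0 0) + n (pt 1 0 0 0)) + (n (pt 0 0 0 0) + n (pt 0 1 0 0)) + (n (pt 0 0 0 0) + n (pt 0 0 0 1)))
      (by rw [corrv_apply, if_pos (by decide : (pt 1 1 0 1) 0 = 1), if_pos (by decide : (pt 1 1 0 1) 1 = 1), if_neg (by decide : ¬ (pt 1 1 0 1) 2 = 1), if_pos (by decide : (pt 1 1 0 1) 3 = 1)]; push_cast; ring)
      (parityL_13 q01 q23 q02 q13 q03 q12 r0 r1 r2 r3 r0p)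
  · exact hval 1 1 1 0 (n (pt 0 0 0 0) + (n (pt 0 0 0 0) + n (pt 1 0 0 0)) + (n (pt 0 0 0 0) + n (pt 0 1 0 0)) + (n (pt 0 0 0 0) + n (pt 0 0 1 0)))
      (by rw [corrv_apply, if_pos (by decide : (pt 1 1 1 0) 0 = 1), if_pos (by decide : (pt 1 1 1 0) 1 = 1), if_pos (by decide : (pt 1 1 1 0) 2 = 1), if_neg (by decide : ¬ (pt 1 1 1 0) 3 = 1)]; push_cast; ring)
      (parityL_14 q01 q23 q02 q13 q03 q12 r0 r1 r2 r3 r0p)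
  · exact hval 1 1 1 1 (n (pt 0 0 0 0) + (n (pt 0 0 0 0) + n (pt 1 0 0 0)) + (n (pt 0 0 0 0) + n (pt 0 1 0 0)) + (n (pt 0 0 0 0) + n (pt 0 0 1 0)) + (n (pt 0 0 0 0) + n (pt 0 0 0 1)))
      (by rw [corrv_apply, if_pos (by decide : (pt 1 1 1 1) 0 = 1), if_pos (by decide : (pt 1 1 1 1) 1 = 1), if_pos (by decide : (pt 1 1 1 1) 2 = 1), if_pos (by decide : (pt 1 1 1 1) 3 = 1)]; push_cast; ring)
      (parityL_15 q01 q23 q02 q13 q03 q12 r0 r1 r2 r3 r0p)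

def ctbl : Fin 6 → Fin 6 → ℕ :=
  ![![4,1,2,2,2,2],![1,4,2,2,2,2],![2,2,4,1,2,2],![2,2,1,4,2,2],![2,2,2,2,4,1],![2,2,2,2,1,4]]

def ktbl : Fin 6 → Fin 6 → ℤ :=
  ![![-2,0,-1,-1,-1,-1],![0,-2,-1,-1,-1,-1],![-1,-1,-2,0,-1,-1],![-1,-1,0,-2,-1,-1],
    ![-1,-1,-1,-1,-2,0],![-1,-1,-1,-1,0,-2]]

lemma card_tbl : ∀ s t : Fin 6, (PlaneS s ∩ PlaneS t).card = ctbl s t := by decide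

lemma key_tbl : ∀ s t : Fin 6, -((ctbl s t : ℚ)) * 2⁻¹ = discGram s t + ((ktbl s t : ℤ) : ℚ) := by
  intro s t
  fin_cases s <;> fin_cases t <;> norm_num [ctbl, ktbl, discGram]

lemma key_diag : ∀ s : Fin 6, -((ctbl s s : ℚ)) * 2⁻¹ = discGram s s + 2 * (((-1 : ℤ)) : ℚ) := by
  intro s
  fin_cases s <;> norm_num [ctbl, discGram]

lemma gram_val (s t : Fin 6) :
    BK (pvec s) (pvec t) = -(((PlaneS s ∩ PlaneS t).card : ℚ)) * 2⁻¹ := by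
  rw [pvec_eq, pvec_eq, BK_halfSum_right, sum_halfSum, Finset.inter_comm]
  ring


/-- The discriminant group of the Kummer lattice `Π` is isomorphic to `(ℤ/2)⁶`, with
generators represented by the classes of the `p_{ij} = (1/2) Σ_{a ∈ P_{ij}} E_a` for the
six coordinate planes `P_{ij} ⊂ 𝔽₂⁴`, and with respect to these generators the
discriminant (quadratic and bilinear) form is given, modulo `2ℤ` resp. `ℤ`, by minus
three hyperbolic blocks `[[0,1/2],[1/2,0]]`. -/
theorem kummer_disc_group :
    ∃ (h : ∀ s : Fin 6, pvec s ∈ dualLat BK KummerLat)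
      (γ : Disc BK KummerLat ≃+ (Fin 6 → ZMod 2)),
      (∀ s : Fin 6, γ (Submodule.Quotient.mk ⟨pvec s, h s⟩) = Pi.single s 1) ∧
      (∀ s t : Fin 6, ∃ k : ℤ, BK (pvec s) (pvec t) = discGram s t + k) ∧
      (∀ s : Fin 6, ∃ k : ℤ, BK (pvec s) (pvec s) = discGram s s + 2 * k) := by
  have hker1 : Submodule.comap (dualLat BK KummerLat).subtype KummerLat ≤
      LinearMap.ker ΦM.toIntLinearMap := by
    intro x hx
    exact ΦM_ker (by exact hx)
  have hker2 : LinearMap.ker ΦM.toIntLinearMap ≤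
      Submodule.comap (dualLat BK KummerLat).subtype KummerLat := by
    intro x hx
    have hx0 : ΦM x = 0 := hx
    exact ker_le_lat x.2 (fun t => congrFun hx0 t)
  set f := Submodule.liftQ (Submodule.comap (dualLat BK KummerLat).subtype KummerLat)
    ΦM.toIntLinearMap hker1 with hf
  have hinj : Function.Injective f := by
    rw [← LinearMap.ker_eq_bot]
    exact Submodule.ker_liftQ_eq_bot _ _ _ hker2
  have hsurj : Function.Surjective f := by
    intro g
    refine ⟨Submodule.Quotient.mk
      (∑ s : Fin 6, ((g s).val : ℤ) • (⟨pvec s, pvec_mem_dual s⟩ : dualLat BK KummerLat)), ?_⟩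
    rw [hf, Submodule.liftQ_apply, map_sum]
    have hterm : ∀ s : Fin 6,
        ΦM.toIntLinearMap (((g s).val : ℤ) • (⟨pvec s, pvec_mem_dual s⟩ : dualLat BK KummerLat))
          = ((g s).val : ℤ) • (Pi.single s 1 : Fin 6 → ZMod 2) := by
      intro s
      rw [map_smul]
      congr 1
      exact ΦM_pvec s _
    rw [Finset.sum_congr rfl fun s _ => hterm s]
    funext t
    rw [Finset.sum_apply]
    have h1 : ∀ s : Fin 6, (((g s).val : ℤ) • (Pi.single s 1 : Fin 6 → ZMod 2)) t
        = if t = s then g t else 0 := by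
      intro s
      rw [Pi.smul_apply, Pi.single_apply]
      rcases eq_or_ne t s with rfl | hne
      · rw [if_pos rfl, if_pos rfl, zsmul_one, Int.cast_natCast]
        exact ZMod.natCast_rightInverse _
      · rw [if_neg hne, if_neg hne, smul_zero]
    rw [Finset.sum_congr rfl fun s _ => h1 s, Finset.sum_ite_eq Finset.univ t fun _ => g t]
    simp
  refine ⟨fun s => pvec_mem_dual s, (LinearEquiv.ofBijective f ⟨hinj, hsurj⟩).toAddEquiv,
    ?_, ?_, ?_⟩
  · intro s
    show f (Submodule.Quotient.mk ⟨pvec s, _⟩) = _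
    rw [hf, Submodule.liftQ_apply]
    exact ΦM_pvec s _
  · intro s t
    exact ⟨ktbl s t, by rw [gram_val, card_tbl s t, key_tbl s t]⟩
  · intro s
    refine ⟨-1, ?_⟩
    rw [gram_val, card_tbl s s, key_diag s]
end

section
/- The Kummer lattice Π is an even negative-definite lattice of rank 16 with discriminant group of order 2^6. -/
open Submodule

namespace KummerAux

/-- standard basis points of `𝔽₂⁴` -/
abbrev dl (i : Fin 4) : F16 := Pi.single i 1

/-- `c` is an affine function (Reed–Muller `RM(1,4)` codeword). -/
def IsAff (c : F16 → ZMod 2) : Prop :=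
  ∃ k : ZMod 2, ∃ l : Fin 4 → ZMod 2, ∀ a, c a = k + ∑ i, l i * a i

/-- `c` is a quadratic function (Reed–Muller `RM(2,4)` codeword). -/
def IsQuad (c : F16 → ZMod 2) : Prop :=
  ∃ k : ZMod 2, ∃ l : Fin 4 → ZMod 2, ∃ q : Fin 4 → Fin 4 → ZMod 2,
    ∀ a, c a = k + (∑ i, l i * a i) + ∑ i, ∑ j, q i j * (a i * a j)

/-- reduction mod 2 -/
def red (u : F16 → ℤ) : F16 → ZMod 2 := fun a => (u a : ZMod 2)

lemma red_add (u v : F16 → ℤ) : red (u + v) = red u + red v := by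
  funext a; simp [red]

lemma red_sub (u v : F16 → ℤ) : red (u - v) = red u - red v := by
  funext a; simp [red]

lemma red_zsmul (z : ℤ) (u : F16 → ℤ) : red (z • u) = (z : ZMod 2) • red u := by
  funext a; simp [red]

lemma IsAff.add {c d : F16 → ZMod 2} (hc : IsAff c) (hd : IsAff d) : IsAff (c + d) := by
  obtain ⟨k, l, hk⟩ := hc; obtain ⟨k', l', hk'⟩ := hd
  exact ⟨k + k', l + l', fun a => by
    simp only [Pi.add_apply, hk a, hk' a, add_mul, Finset.sum_add_distrib]; ring⟩

lemma IsAff.smul2 (z : ZMod 2) {c : F16 → ZMod 2} (hc : IsAff c) : IsAff (z • c) := by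
  obtain ⟨k, l, hk⟩ := hc
  exact ⟨z * k, z • l, fun a => by
    simp only [Pi.smul_apply, smul_eq_mul, hk a, mul_add, Finset.mul_sum, mul_assoc]⟩

lemma IsAff.zero : IsAff 0 := ⟨0, 0, fun a => by simp⟩

lemma IsQuad.add {c d : F16 → ZMod 2} (hc : IsQuad c) (hd : IsQuad d) : IsQuad (c + d) := by
  obtain ⟨k, l, q, hk⟩ := hc; obtain ⟨k', l', q', hk'⟩ := hd
  refine ⟨k + k', l + l', q + q', fun a => ?_⟩
  simp only [Pi.add_apply, hk a, hk' a, add_mul, Finset.sum_add_distrib]; ring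

lemma IsQuad.smul2 (z : ZMod 2) {c : F16 → ZMod 2} (hc : IsQuad c) : IsQuad (z • c) := by
  obtain ⟨k, l, q, hk⟩ := hc
  refine ⟨z * k, z • l, z • q, fun a => ?_⟩
  simp only [Pi.smul_apply, smul_eq_mul, hk a, mul_add, Finset.mul_sum, mul_assoc]

lemma IsAff.isQuad {c : F16 → ZMod 2} (hc : IsAff c) : IsQuad c := by
  obtain ⟨k, l, hk⟩ := hc
  exact ⟨k, l, 0, fun a => by simp [hk a]⟩

/-- integral model of the Kummer lattice: parity vectors with affine reduction -/
def Pu : Submodule ℤ (F16 → ℤ) where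
  carrier := { u | IsAff (red u) }
  add_mem' := by intro u v hu hv; simpa [red_add] using hu.add hv
  zero_mem' := by
    have h0 : red 0 = 0 := funext fun a => by simp [red]
    show IsAff (red 0); rw [h0]; exact IsAff.zero
  smul_mem' := by
    intro z u hu
    show IsAff (red (z • u))
    rw [red_zsmul]; exact hu.smul2 _

/-- integral model of the dual lattice: parity vectors with quadratic reduction -/
def Du : Submodule ℤ (F16 → ℤ) where
  carrier := { u | IsQuad (red u) }
  add_mem' := by intro u v hu hv; simpa [red_add] using hu.add hv
  zero_mem' := by
    have h0 : red 0 = 0 := funext fun a => by simp [red]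
    show IsQuad (red 0); rw [h0]; exact IsAff.zero.isQuad
  smul_mem' := by
    intro z u hu
    show IsQuad (red (z • u))
    rw [red_zsmul]; exact hu.smul2 _

lemma Pu_le_Du : Pu ≤ Du := fun _ hu => IsAff.isQuad hu

lemma mem_Pu {u : F16 → ℤ} : u ∈ Pu ↔ IsAff (red u) := Iff.rfl
lemma mem_Du {u : F16 → ℤ} : u ∈ Du ↔ IsQuad (red u) := Iff.rfl

/-- the rescaled inclusion `u ↦ u/2` of the integral models into `VK`. -/
def ρ : (F16 → ℤ) →ₗ[ℤ] VK where
  toFun u := fun a => (u a : ℚ) / 2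
  map_add' u v := funext fun a => by simp only [Pi.add_apply, Int.cast_add]; ring
  map_smul' z u := funext fun a => by
    simp only [Pi.smul_apply, smul_eq_mul, RingHom.id_apply, Int.cast_mul, zsmul_eq_mul]
    push_cast; ring

lemma ρ_apply (u : F16 → ℤ) (a : F16) : ρ u a = (u a : ℚ) / 2 := rfl

lemma ρ_inj : Function.Injective ρ := by
  intro u v h
  funext a
  have := congrFun h a
  simp only [ρ_apply] at this
  field_simp at this
  exact_mod_cast this

end KummerAux

namespace KummerAux

lemma zmod2_sum {M : Type*} [AddCommMonoid M] (f : ZMod 2 → M) : ∑ x, f x = f 0 + f 1 :=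
  Fin.sum_univ_two f

def E4 : (ZMod 2 × ZMod 2 × ZMod 2 × ZMod 2) ≃ F16 where
  toFun p := ![p.1, p.2.1, p.2.2.1, p.2.2.2]
  invFun a := (a 0, a 1, a 2, a 3)
  left_inv p := by rfl
  right_inv a := by
    funext i
    fin_cases i <;> rfl

lemma sum_F16 {M : Type*} [AddCommMonoid M] (f : F16 → M) :
    ∑ a, f a = f ![0,0,0,0] + f ![1,0,0,0] + f ![0,1,0,0] + f ![1,1,0,0]
      + f ![0,0,1,0] + f ![1,0,1,0] + f ![0,1,1,0] + f ![1,1,1,0]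
      + f ![0,0,0,1] + f ![1,0,0,1] + f ![0,1,0,1] + f ![1,1,0,1]
      + f ![0,0,1,1] + f ![1,0,1,1] + f ![0,1,1,1] + f ![1,1,1,1] := by
  rw [← Fintype.sum_equiv E4 (fun p => f (E4 p)) f (fun p => rfl)]
  rw [Fintype.sum_prod_type]
  simp only [Fintype.sum_prod_type, zmod2_sum]
  show f ![0,0,0,0] + f ![0,0,0,1] + (f ![0,0,1,0] + f ![0,0,1,1])
      + (f ![0,1,0,0] + f ![0,1,0,1] + (f ![0,1,1,0] + f ![0,1,1,1]))
      + (f ![1,0,0,0] + f ![1,0,0,1] + (f ![1,0,1,0] + f ![1,0,1,1])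
      + (f ![1,1,0,0] + f ![1,1,0,1] + (f ![1,1,1,0] + f ![1,1,1,1]))) = _
  abel

end KummerAux

namespace KummerAux

lemma point_decomp (a : F16) : a = ∑ i, a i • dl i := by
  funext j
  rw [Finset.sum_apply]
  simp only [Pi.smul_apply, dl, Pi.single_apply, smul_eq_mul, mul_ite, mul_one, mul_zero]
  rw [Finset.sum_ite_eq Finset.univ j a]
  simp

lemma φ_eq (φ : F16 →ₗ[ZMod 2] ZMod 2) (a : F16) : φ a = ∑ i, φ (dl i) * a i := by
  conv_lhs => rw [point_decomp a]
  rw [map_sum]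
  exact Finset.sum_congr rfl fun i _ => by rw [map_smul, smul_eq_mul, mul_comm]

/-- build the linear functional with coefficient vector `l` -/
def φv (l : Fin 4 → ZMod 2) : F16 →ₗ[ZMod 2] ZMod 2 where
  toFun a := ∑ i, l i * a i
  map_add' a b := by
    simp only [Pi.add_apply, mul_add, Finset.sum_add_distrib]
  map_smul' z a := by
    simp only [Pi.smul_apply, smul_eq_mul, RingHom.id_apply, Finset.mul_sum]
    exact Finset.sum_congr rfl fun i _ => by ring

lemma φv_apply (l : Fin 4 → ZMod 2) (a : F16) : φv l a = ∑ i, l i * a i := rfl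

lemma φv_dl (l : Fin 4 → ZMod 2) (j : Fin 4) : φv l (dl j) = l j := by
  rw [φv_apply]
  simp only [dl, Pi.single_apply, mul_ite, mul_one, mul_zero]
  rw [Finset.sum_ite_eq' Finset.univ j l]
  simp

lemma φv_ne_zero {l : Fin 4 → ZMod 2} (hl : l ≠ 0) : φv l ≠ 0 := by
  intro h
  apply hl
  funext j
  have := congrArg (fun ψ => ψ (dl j)) h
  simpa [φv_dl] using this

/-- integer vectors lie in the Kummer lattice -/
lemma cast_mem_Kummer (z : F16 → ℤ) : (fun a => (z a : ℚ)) ∈ KummerLat := by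
  have hz : (fun a => (z a : ℚ)) = ∑ a : F16, z a • EK a := by
    funext b
    rw [Finset.sum_apply]
    simp only [Pi.smul_apply, EK, smul_ite, smul_zero]
    rw [Finset.sum_ite_eq Finset.univ b (fun a => ((z a : ℤ) • 1 : ℚ))]
    simp
  rw [hz]
  exact Submodule.sum_mem _ fun a _ => Submodule.smul_mem _ _
    (Submodule.subset_span (Or.inl (Set.mem_range_self a)))

end KummerAux

namespace KummerAux

lemma φv_dl_apply (j : Fin 4) (a : F16) : φv (dl j) a = a j := by
  rw [φv_apply]
  simp only [dl, Pi.single_apply, ite_mul, one_mul, zero_mul]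
  rw [Finset.sum_ite_eq' Finset.univ j a]
  simp

lemma EK_eq (a : F16) : EK a = ρ (fun b => if b = a then 2 else 0) := by
  funext b
  simp only [EK, ρ_apply, apply_ite (fun n : ℤ => (n : ℚ))]
  split <;> norm_num

lemma halfSum_eq (H : Finset F16) :
    halfSum H = ρ (fun a => if a ∈ H then 1 else 0) := by
  funext b
  simp only [halfSum, ρ_apply, Pi.smul_apply, smul_eq_mul, Finset.sum_apply, EK]
  rw [Finset.sum_ite_eq H b (fun _ => (1 : ℚ))]
  simp only [apply_ite (fun n : ℤ => (n : ℚ))]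
  split <;> norm_num

/-- half of an even integer vector is in the Kummer lattice -/
lemma even_mem {u : F16 → ℤ} (h : red u = 0) : ρ u ∈ KummerLat := by
  have h2 : ∀ a, (2 : ℤ) ∣ u a := fun a =>
    (ZMod.intCast_zmod_eq_zero_iff_dvd _ 2).1 (congrFun h a)
  have : ρ u = fun a => ((u a / 2 : ℤ) : ℚ) := by
    funext a
    obtain ⟨t, ht⟩ := h2 a
    rw [ρ_apply, ht]
    rw [Int.mul_ediv_cancel_left t (by norm_num)]
    push_cast
    ring
  rw [this]
  exact cast_mem_Kummer _

lemma ite_eq_zmod2 (t c : ZMod 2) : (if t = c then (1 : ZMod 2) else 0) = c + 1 + t := by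
  revert t c; decide

/-- membership characterization of the Kummer lattice -/
lemma Kummer_eq : KummerLat = Submodule.map ρ Pu := by
  apply le_antisymm
  · rw [KummerLat, Submodule.span_le]
    rintro v (⟨a, rfl⟩ | ⟨H, ⟨φ, c, hφ, hH⟩, rfl⟩)
    · refine ⟨fun b => if b = a then 2 else 0, ?_, (EK_eq a).symm⟩
      refine ⟨0, 0, fun b => ?_⟩
      simp only [red, apply_ite (fun n : ℤ => (n : ZMod 2))]
      split <;>
        simp [show ((2 : ℤ) : ZMod 2) = 0 from by decide, show (2 : ZMod 2) = 0 from by decide]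
    · refine ⟨fun a => if a ∈ H then 1 else 0, ?_, (halfSum_eq H).symm⟩
      refine ⟨c + 1, fun i => φ (dl i), fun a => ?_⟩
      simp only [red, apply_ite (fun n : ℤ => (n : ZMod 2)), Int.cast_one, Int.cast_zero]
      rw [← φ_eq φ a]
      rw [show ((if a ∈ H then (1:ZMod 2) else 0)) = (if φ a = c then (1:ZMod 2) else 0) from
        if_congr (hH a) rfl rfl]
      rw [ite_eq_zmod2]
  · rintro v ⟨u, hu, rfl⟩
    obtain ⟨k, l, hkl⟩ := hu
    by_cases hl : l = 0
    · by_cases hk : k = 0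
      · apply even_mem
        funext a
        rw [show red u a = k + ∑ i, l i * a i from hkl a, hl, hk]
        simp
      · have hk1 : k = 1 := by
          have hz : ∀ x : ZMod 2, x ≠ 0 → x = 1 := by decide
          exact hz k hk
        -- use two complementary hyperplanes x₀ = 0/1
        set H0 : Finset F16 := Finset.univ.filter (fun a => a 0 = 0) with hH0
        set H1 : Finset F16 := Finset.univ.filter (fun a => a 0 = 1) with hH1
        have hyp0 : IsAffineHyperplane H0 :=
          ⟨φv (dl 0), 0, φv_ne_zero (by intro h; exact one_ne_zero (congrFun h 0)),
            fun a => by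
              simp only [hH0, Finset.mem_filter, Finset.mem_univ, true_and, φv_dl_apply]⟩
        have hyp1 : IsAffineHyperplane H1 :=
          ⟨φv (dl 0), 1, φv_ne_zero (by intro h; exact one_ne_zero (congrFun h 0)),
            fun a => by
              simp only [hH1, Finset.mem_filter, Finset.mem_univ, true_and, φv_dl_apply]⟩
        have h0K : halfSum H0 ∈ KummerLat :=
          Submodule.subset_span (Or.inr ⟨H0, hyp0, rfl⟩)
        have h1K : halfSum H1 ∈ KummerLat :=
          Submodule.subset_span (Or.inr ⟨H1, hyp1, rfl⟩)
        set m : F16 → ℤ := (fun a => if a ∈ H0 then 1 else 0) + (fun a => if a ∈ H1 then 1 else 0)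
          with hm
        have hrm : red m = 1 := by
          funext a
          have : ∀ x : ZMod 2, ((if x = 0 then (1:ZMod 2) else 0) + (if x = 1 then 1 else 0)) = 1 := by
            decide
          simp only [red, hm, Pi.add_apply, hH0, hH1, Finset.mem_filter, Finset.mem_univ,
            true_and, apply_ite (fun n : ℤ => (n : ZMod 2))]
          push_cast
          exact this (a 0)
        have hmem : ρ (u - m) ∈ KummerLat := by
          apply even_mem
          rw [red_sub, hrm]
          funext a
          rw [Pi.sub_apply, show red u a = k + ∑ i, l i * a i from hkl a, hl, hk1]
          simp
        have : ρ u = ρ (u - m) + (halfSum H0 + halfSum H1) := by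
          rw [halfSum_eq, halfSum_eq, ← map_add ρ, ← map_add ρ, hm]
          congr 1
          abel
        rw [this]
        exact Submodule.add_mem _ hmem (Submodule.add_mem _ h0K h1K)
    · -- l ≠ 0 : single hyperplane φv l = k + 1
      set H : Finset F16 := Finset.univ.filter (fun a => φv l a = k + 1) with hHdef
      have hyp : IsAffineHyperplane H :=
        ⟨φv l, k + 1, φv_ne_zero hl, fun a => by simp [hHdef]⟩
      have hK : halfSum H ∈ KummerLat := Submodule.subset_span (Or.inr ⟨H, hyp, rfl⟩)
      set m : F16 → ℤ := fun a => if a ∈ H then 1 else 0 with hm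
      have hrm : red m = red u := by
        funext a
        have hua := hkl a
        simp only [red] at hua ⊢
        simp only [hm, hHdef, Finset.mem_filter, Finset.mem_univ, true_and,
          apply_ite (fun n : ℤ => (n : ZMod 2)), Int.cast_one, Int.cast_zero]
        rw [hua, ite_eq_zmod2 (φv l a) (k + 1), add_assoc k 1 1,
          show (1 : ZMod 2) + 1 = 0 from rfl, add_zero, φv_apply]
      have hmem : ρ (u - m) ∈ KummerLat := by
        apply even_mem
        rw [red_sub, hrm]
        simp
      have : ρ u = ρ (u - m) + halfSum H := by
        rw [halfSum_eq, ← map_add ρ, hm]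
        congr 1
        abel
      rw [this]
      exact Submodule.add_mem _ hmem hK

end KummerAux

namespace KummerAux

lemma BK_apply (v w : VK) : BK v w = -2 * ∑ a, v a * w a := rfl

lemma spanQ_top : span ℚ ((KummerLat : Set VK)) = ⊤ := by
  rw [eq_top_iff]
  intro x _
  have hx : x = ∑ a : F16, x a • EK a := by
    funext b
    rw [Finset.sum_apply]
    simp only [Pi.smul_apply, EK, smul_ite, smul_zero]
    rw [Finset.sum_ite_eq Finset.univ b (fun a => (x a • 1 : ℚ))]
    simp
  rw [hx]
  exact Submodule.sum_mem _ fun a _ => Submodule.smul_mem _ _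
    (Submodule.subset_span (Submodule.subset_span (Or.inl (Set.mem_range_self a))))

lemma BK_ρ_EK (u : F16 → ℤ) (b : F16) : BK (ρ u) (EK b) = -(u b) := by
  rw [BK_apply]
  simp only [EK, mul_ite, mul_one, mul_zero]
  rw [Finset.sum_ite_eq' Finset.univ b (fun a => ρ u a)]
  simp [ρ_apply]
  ring

lemma BK_ρ_halfSum (u : F16 → ℤ) (H : Finset F16) :
    BK (ρ u) (halfSum H) = -(∑ a ∈ H, (u a : ℚ)) / 2 := by
  rw [halfSum_eq, BK_apply]
  have : ∀ a : F16, ρ u a * ρ (fun a => if a ∈ H then 1 else 0) a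
      = (u a : ℚ) * (if a ∈ H then 1 else 0) / 4 := by
    intro a
    simp only [ρ_apply, apply_ite (fun n : ℤ => (n : ℚ))]
    push_cast
    ring
  rw [Finset.sum_congr rfl fun a _ => this a]
  rw [← Finset.sum_div]
  simp only [mul_ite, mul_one, mul_zero]
  rw [Finset.sum_ite_mem Finset.univ H (fun a => (u a : ℚ))]
  simp only [Finset.univ_inter]
  ring

set_option maxRecDepth 40000 in
lemma hyp_monomial_sums : ∀ l : Fin 4 → ZMod 2, l ≠ 0 → ∀ c : ZMod 2,
    (∀ i j : Fin 4, ∑ a : F16, (if ∑ t, l t * a t = c then a i * a j else 0) = 0)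
    ∧ (∀ i : Fin 4, ∑ a : F16, (if ∑ t, l t * a t = c then a i else 0) = 0)
    ∧ (∑ a : F16, (if ∑ t, l t * a t = c then (1 : ZMod 2) else 0)) = 0 := by decide

/-- the mod 2 sum of a quadratic codeword over an affine hyperplane vanishes -/
lemma quad_hyp_sum {c : F16 → ZMod 2} (hc : IsQuad c) {H : Finset F16}
    (hH : IsAffineHyperplane H) : ∑ a ∈ H, c a = 0 := by
  obtain ⟨k, l, q, hkl⟩ := hc
  obtain ⟨φ, c0, hφ, hmem⟩ := hH
  set lv : Fin 4 → ZMod 2 := fun i => φ (dl i) with hlv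
  have hlv0 : lv ≠ 0 := by
    intro h
    apply hφ
    apply LinearMap.ext
    intro a
    rw [φ_eq φ a]
    have h' : ∀ i, φ (dl i) = 0 := fun i => by
      have := congrFun h i
      simpa [hlv] using this
    simp [h']
  have hHfilter : H = Finset.univ.filter (fun a => ∑ t, lv t * a t = c0) := by
    ext a
    simp only [Finset.mem_filter, Finset.mem_univ, true_and, hmem a, φ_eq φ a, hlv]
  obtain ⟨hq, hl, h1⟩ := hyp_monomial_sums lv hlv0 c0
  rw [hHfilter, Finset.sum_filter]
  rw [Finset.sum_congr rfl (fun a _ => by rw [if_congr (Iff.rfl) (hkl a) rfl])]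
  have expand : ∀ a : F16, (if ∑ t, lv t * a t = c0
        then k + (∑ i, l i * a i) + ∑ i, ∑ j, q i j * (a i * a j) else 0)
      = k * (if ∑ t, lv t * a t = c0 then (1:ZMod 2) else 0)
        + (∑ i, l i * (if ∑ t, lv t * a t = c0 then a i else 0))
        + (∑ i, ∑ j, q i j * (if ∑ t, lv t * a t = c0 then a i * a j else 0)) := by
    intro a
    split
    · simp [Finset.mul_sum]
    · simp
  rw [Finset.sum_congr rfl (fun a _ => expand a)]
  rw [Finset.sum_add_distrib, Finset.sum_add_distrib]
  rw [← Finset.mul_sum, h1, mul_zero]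
  have hA : (∑ x : F16, ∑ i : Fin 4, l i * (if ∑ t, lv t * x t = c0 then x i else 0)) = 0 := by
    rw [Finset.sum_comm]
    exact Finset.sum_eq_zero fun i _ => by rw [← Finset.mul_sum, hl i, mul_zero]
  have hB : (∑ x : F16, ∑ i : Fin 4, ∑ j : Fin 4,
      q i j * (if ∑ t, lv t * x t = c0 then x i * x j else 0)) = 0 := by
    rw [Finset.sum_comm]
    refine Finset.sum_eq_zero fun i _ => ?_
    rw [Finset.sum_comm]
    exact Finset.sum_eq_zero fun j _ => by rw [← Finset.mul_sum, hq i j, mul_zero]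
  rw [hA, hB]
  simp

/-- `map ρ Du` is contained in the dual lattice -/
lemma mapDu_le_dual : Submodule.map ρ Du ≤ dualLat BK KummerLat := by
  rintro v ⟨u, hu, rfl⟩
  constructor
  · rw [spanQ_top]; trivial
  · intro w hw
    induction hw using Submodule.span_induction with
    | mem x hx =>
      rcases hx with ⟨a, rfl⟩ | ⟨H, hH, rfl⟩
      · exact ⟨-(u a), by rw [BK_ρ_EK]; push_cast; ring⟩
      · have hs : ∑ a ∈ H, red u a = 0 := quad_hyp_sum hu hH
        have : ((∑ a ∈ H, u a : ℤ) : ZMod 2) = 0 := by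
          push_cast
          simpa [red] using hs
        obtain ⟨t, ht⟩ := (ZMod.intCast_zmod_eq_zero_iff_dvd _ 2).1 this
        refine ⟨-t, ?_⟩
        rw [BK_ρ_halfSum]
        rw [show (∑ a ∈ H, (u a : ℚ)) = ((∑ a ∈ H, u a : ℤ) : ℚ) by push_cast; ring, ht]
        push_cast
        ring
    | zero => exact ⟨0, by simp⟩
    | add x y _ _ hx hy =>
      obtain ⟨n, hn⟩ := hx; obtain ⟨m, hm⟩ := hy
      exact ⟨n + m, by rw [map_add, hn, hm]; push_cast; ring⟩
    | smul z x _ hx =>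
      obtain ⟨n, hn⟩ := hx
      refine ⟨z * n, by rw [map_zsmul, hn, zsmul_eq_mul]; push_cast; ring⟩

end KummerAux

namespace KummerAux

lemma zmod2_cases (x : ZMod 2) : x = 0 ∨ x = 1 := by revert x; decide

lemma aeta (a : F16) : a = ![a 0, a 1, a 2, a 3] := by
  funext i; fin_cases i <;> rfl

lemma dual_le_mapDu : dualLat BK KummerLat ≤ Submodule.map ρ Du := by
  rintro v ⟨hspan, hint⟩
  have hEa : ∀ a, ∃ n : ℤ, v a = (n : ℚ) / 2 := by
    intro a
    obtain ⟨n, hn⟩ := hint (EK a) (Submodule.subset_span (Or.inl (Set.mem_range_self a)))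
    have hBE : BK v (EK a) = -2 * v a := by
      rw [BK_apply]
      simp only [EK, mul_ite, mul_one, mul_zero]
      rw [Finset.sum_ite_eq' Finset.univ a v]
      simp
    rw [hBE] at hn
    exact ⟨-n, by push_cast; linarith⟩
  choose uu huu using hEa
  have hv : v = ρ uu := funext fun a => by rw [ρ_apply, huu a]
  refine ⟨uu, ?_, hv.symm⟩
  set c : F16 → ZMod 2 := red uu with hc
  show IsQuad c
  have key : ∀ (l : Fin 4 → ZMod 2), l ≠ 0 → ∀ k : ZMod 2,
      (∑ a : F16, if (∑ t, l t * a t) = k then c a else 0) = 0 := by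
    intro l hl k
    set H : Finset F16 := Finset.univ.filter (fun a => (∑ t, l t * a t) = k) with hH
    have hyp : IsAffineHyperplane H :=
      ⟨φv l, k, φv_ne_zero hl, fun a => by simp [hH, φv_apply]⟩
    obtain ⟨n, hn⟩ := hint (halfSum H) (Submodule.subset_span (Or.inr ⟨H, hyp, rfl⟩))
    rw [hv, BK_ρ_halfSum] at hn
    have hq : (∑ a ∈ H, (uu a : ℚ)) = -2 * n := by
      field_simp at hn
      linarith
    have hz : ((∑ a ∈ H, uu a : ℤ) : ZMod 2) = 0 := by
      have : (∑ a ∈ H, uu a : ℤ) = -2 * n := by exact_mod_cast hq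
      rw [this]
      push_cast
      have two2 : (2 : ZMod 2) = 0 := rfl
      linear_combination (-(n : ZMod 2)) * two2
    rw [← Finset.sum_filter, ← hH]
    push_cast at hz
    exact hz
  have two : (2 : ZMod 2) = 0 := rfl
  have hE0 := key ![1,0,0,0] (by decide) 0
  have hE1 := key ![0,1,0,0] (by decide) 0
  have hE2 := key ![0,0,1,0] (by decide) 0
  have hE3 := key ![0,0,0,1] (by decide) 0
  have hE4 := key ![1,1,1,1] (by decide) 0
  rw [sum_F16] at hE0 hE1 hE2 hE3 hE4
  simp +decide [Fin.sum_univ_four] at hE0 hE1 hE2 hE3 hE4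
  refine ⟨c ![0,0,0,0],
    ![c ![1,0,0,0] + c ![0,0,0,0], c ![0,1,0,0] + c ![0,0,0,0],
      c ![0,0,1,0] + c ![0,0,0,0], c ![0,0,0,1] + c ![0,0,0,0]],
    ![![0, c ![1,1,0,0] + c ![1,0,0,0] + c ![0,1,0,0] + c ![0,0,0,0],
         c ![1,0,1,0] + c ![1,0,0,0] + c ![0,0,1,0] + c ![0,0,0,0],
         c ![1,0,0,1] + c ![1,0,0,0] + c ![0,0,0,1] + c ![0,0,0,0]],
      ![0, 0, c ![0,1,1,0] + c ![0,1,0,0] + c ![0,0,1,0] + c ![0,0,0,0],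
         c ![0,1,0,1] + c ![0,1,0,0] + c ![0,0,0,1] + c ![0,0,0,0]],
      ![0, 0, 0, c ![0,0,1,1] + c ![0,0,1,0] + c ![0,0,0,1] + c ![0,0,0,0]],
      ![0, 0, 0, 0]], fun a => ?_⟩
  obtain ⟨x0, x1, x2, x3, rfl⟩ : ∃ x0 x1 x2 x3, a = ![x0, x1, x2, x3] :=
    ⟨a 0, a 1, a 2, a 3, aeta a⟩
  simp only [Fin.sum_univ_four, Matrix.cons_val_zero, Matrix.cons_val_one, Matrix.head_cons,
    Matrix.cons_val_two, Matrix.cons_val_three, Matrix.tail_cons]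
  rcases zmod2_cases x0 with rfl | rfl <;> rcases zmod2_cases x1 with rfl | rfl <;>
    rcases zmod2_cases x2 with rfl | rfl <;> rcases zmod2_cases x3 with rfl | rfl
  · linear_combination two - two
  · linear_combination ((-1 : ZMod 2) * (c ![0,0,0,0])) * two
  · linear_combination ((-1 : ZMod 2) * (c ![0,0,0,0])) * two
  · linear_combination (((-2 : ZMod 2)) * (c ![0,0,0,0]) + (-1 : ZMod 2) * (c ![0,0,1,0]) + (-1 : ZMod 2) * (c ![0,0,0,1])) * two
  · linear_combination ((-1 : ZMod 2) * (c ![0,0,0,0])) * two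
  · linear_combination (((-2 : ZMod 2)) * (c ![0,0,0,0]) + (-1 : ZMod 2) * (c ![0,1,0,0]) + (-1 : ZMod 2) * (c ![0,0,0,1])) * two
  · linear_combination (((-2 : ZMod 2)) * (c ![0,0,0,0]) + (-1 : ZMod 2) * (c ![0,1,0,0]) + (-1 : ZMod 2) * (c ![0,0,1,0])) * two
  · linear_combination hE0 + (((-4 : ZMod 2)) * (c ![0,0,0,0]) + ((-2 : ZMod 2)) * (c ![0,1,0,0]) + ((-2 : ZMod 2)) * (c ![0,0,1,0]) + ((-2 : ZMod 2)) * (c ![0,0,0,1]) + (-1 : ZMod 2) * (c ![0,1,1,0]) + (-1 : ZMod 2) * (c ![0,1,0,1]) + (-1 : ZMod 2) * (c ![0,0,1,1])) * two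
  · linear_combination ((-1 : ZMod 2) * (c ![0,0,0,0])) * two
  · linear_combination (((-2 : ZMod 2)) * (c ![0,0,0,0]) + (-1 : ZMod 2) * (c ![1,0,0,0]) + (-1 : ZMod 2) * (c ![0,0,0,1])) * two
  · linear_combination (((-2 : ZMod 2)) * (c ![0,0,0,0]) + (-1 : ZMod 2) * (c ![1,0,0,0]) + (-1 : ZMod 2) * (c ![0,0,1,0])) * two
  · linear_combination hE1 + (((-4 : ZMod 2)) * (c ![0,0,0,0]) + ((-2 : ZMod 2)) * (c ![1,0,0,0]) + ((-2 : ZMod 2)) * (c ![0,0,1,0]) + ((-2 : ZMod 2)) * (c ![0,0,0,1]) + (-1 : ZMod 2) * (c ![1,0,1,0]) + (-1 : ZMod 2) * (c ![1,0,0,1]) + (-1 : ZMod 2) * (c ![0,0,1,1])) * two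
  · linear_combination (((-2 : ZMod 2)) * (c ![0,0,0,0]) + (-1 : ZMod 2) * (c ![1,0,0,0]) + (-1 : ZMod 2) * (c ![0,1,0,0])) * two
  · linear_combination hE2 + (((-4 : ZMod 2)) * (c ![0,0,0,0]) + ((-2 : ZMod 2)) * (c ![1,0,0,0]) + ((-2 : ZMod 2)) * (c ![0,1,0,0]) + ((-2 : ZMod 2)) * (c ![0,0,0,1]) + (-1 : ZMod 2) * (c ![1,1,0,0]) + (-1 : ZMod 2) * (c ![1,0,0,1]) + (-1 : ZMod 2) * (c ![0,1,0,1])) * two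
  · linear_combination hE3 + (((-4 : ZMod 2)) * (c ![0,0,0,0]) + ((-2 : ZMod 2)) * (c ![1,0,0,0]) + ((-2 : ZMod 2)) * (c ![0,1,0,0]) + ((-2 : ZMod 2)) * (c ![0,0,1,0]) + (-1 : ZMod 2) * (c ![1,1,0,0]) + (-1 : ZMod 2) * (c ![1,0,1,0]) + (-1 : ZMod 2) * (c ![0,1,1,0])) * two
  · linear_combination hE4 + (((-6 : ZMod 2)) * (c ![0,0,0,0]) + ((-2 : ZMod 2)) * (c ![1,0,0,0]) + ((-2 : ZMod 2)) * (c ![0,1,0,0]) + ((-2 : ZMod 2)) * (c ![0,0,1,0]) + ((-2 : ZMod 2)) * (c ![0,0,0,1]) + (-1 : ZMod 2) * (c ![1,1,0,0]) + (-1 : ZMod 2) * (c ![1,0,1,0]) + (-1 : ZMod 2) * (c ![1,0,0,1]) + (-1 : ZMod 2) * (c ![0,1,1,0]) + (-1 : ZMod 2) * (c ![0,1,0,1]) + (-1 : ZMod 2) * (c ![0,0,1,1])) * two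

lemma dual_eq : dualLat BK KummerLat = Submodule.map ρ Du :=
  le_antisymm dual_le_mapDu mapDu_le_dual

end KummerAux

namespace KummerAux

def sq2 : ZMod 2 → ZMod 4 := fun x => if x = 0 then 0 else 1

lemma sq_bridge (n : ℤ) : ((n : ZMod 4))^2 = sq2 ((n : ZMod 2)) := by
  have four0 : (4 : ZMod 4) = 0 := rfl
  have two2 : (2 : ZMod 2) = 0 := rfl
  rcases Int.even_or_odd n with ⟨m, rfl⟩ | ⟨m, rfl⟩
  · have h2 : ((m + m : ℤ) : ZMod 2) = 0 := by
      push_cast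
      linear_combination (m : ZMod 2) * two2
    rw [h2]
    show _ = (0 : ZMod 4)
    push_cast
    linear_combination ((m : ZMod 4))^2 * four0
  · have h2 : ((2 * m + 1 : ℤ) : ZMod 2) = 1 := by
      push_cast
      linear_combination (m : ZMod 2) * two2
    rw [h2]
    show _ = (1 : ZMod 4)
    push_cast
    linear_combination ((m : ZMod 4)^2 + (m : ZMod 4)) * four0

set_option maxRecDepth 40000 in
lemma affine_sq_sum : ∀ k : ZMod 2, ∀ l : Fin 4 → ZMod 2,
    ∑ a : F16, sq2 (k + ∑ i, l i * a i) = 0 := by decide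

lemma sum_sq_div4 {u : F16 → ℤ} (hu : IsAff (red u)) : (4 : ℤ) ∣ ∑ a, (u a)^2 := by
  obtain ⟨k, l, hkl⟩ := hu
  have h0 : ((∑ a : F16, (u a)^2 : ℤ) : ZMod 4) = 0 := by
    push_cast
    rw [Finset.sum_congr rfl fun a _ => sq_bridge (u a)]
    rw [Finset.sum_congr rfl fun a _ => by
      rw [show ((u a : ZMod 2)) = k + ∑ i, l i * a i from hkl a]]
    exact affine_sq_sum k l
  have hdvd := (ZMod.intCast_zmod_eq_zero_iff_dvd _ 4).mp h0
  exact_mod_cast hdvd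

lemma kummer_even : ∀ v ∈ KummerLat, ∃ k : ℤ, BK v v = 2 * k := by
  intro v hv
  rw [Kummer_eq] at hv
  obtain ⟨u, hu, rfl⟩ := hv
  obtain ⟨m, hm⟩ := sum_sq_div4 hu
  refine ⟨-m, ?_⟩
  have hterm : ∀ a : F16, ρ u a * ρ u a = ((u a)^2 : ℤ) / 4 := by
    intro a
    rw [ρ_apply]
    push_cast
    ring
  rw [BK_apply, Finset.sum_congr rfl fun a _ => hterm a, ← Finset.sum_div]
  rw [show (∑ a : F16, (((u a)^2 : ℤ) : ℚ)) = ((∑ a, (u a)^2 : ℤ) : ℚ) by push_cast; ring, hm]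
  push_cast
  ring

lemma kummer_negdef : ∀ v ∈ KummerLat, v ≠ 0 → BK v v < 0 := by
  intro v _ hv0
  have hb : ∃ b, v b ≠ 0 := by
    by_contra h
    push_neg at h
    exact hv0 (funext h)
  obtain ⟨b, hb⟩ := hb
  have hpos : 0 < ∑ a, v a * v a :=
    Finset.sum_pos' (fun a _ => mul_self_nonneg _) ⟨b, Finset.mem_univ b, mul_self_pos.2 hb⟩
  rw [BK_apply]
  nlinarith

end KummerAux

namespace KummerAux

lemma twoPoint_mem_Pu (a : F16) : (fun b => if b = a then (2:ℤ) else 0) ∈ Pu := by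
  refine ⟨0, 0, fun b => ?_⟩
  simp only [red, apply_ite (fun n : ℤ => (n : ZMod 2))]
  split <;>
    simp [show ((2 : ℤ) : ZMod 2) = 0 from by decide, show (2 : ZMod 2) = 0 from by decide]

instance : Module.Finite ℤ ↥Pu := Module.Finite.iff_fg.mpr (IsNoetherian.noetherian Pu)

lemma card_F16 : Fintype.card F16 = 16 := by
  rw [Fintype.card_fun]
  rfl

lemma Pu_finrank : Module.finrank ℤ ↥Pu = 16 := by
  apply le_antisymm
  · have h := Submodule.finrank_le Pu
    rwa [Module.finrank_fintype_fun_eq_card, card_F16] at h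
  · -- 16 linearly independent vectors
    set fam : F16 → ↥Pu := fun a => ⟨fun b => if b = a then (2:ℤ) else 0, twoPoint_mem_Pu a⟩
      with hfam
    have hraw : LinearIndependent ℤ (fun a : F16 => (fun b => if b = a then (2:ℤ) else 0)) := by
      rw [Fintype.linearIndependent_iff]
      intro g hg a
      have := congrFun hg a
      simp only [Finset.sum_apply, Pi.smul_apply, smul_ite, smul_zero, Pi.zero_apply] at this
      rw [Finset.sum_ite_eq Finset.univ a (fun i => g i • (2:ℤ))] at this
      simp only [Finset.mem_univ, if_true, smul_eq_mul] at this
      omega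
    have hli : LinearIndependent ℤ fam :=
      LinearIndependent.of_comp Pu.subtype hraw
    have := hli.fintype_card_le_finrank
    rwa [card_F16] at this
  
noncomputable def kummerBasis : Module.Basis (Fin 16) ℤ ↥KummerLat :=
  (Module.finBasisOfFinrankEq ℤ ↥Pu Pu_finrank).map
    ((Submodule.equivMapOfInjective ρ ρ_inj Pu).trans (LinearEquiv.ofEq _ _ Kummer_eq.symm))

end KummerAux

namespace KummerAux

def I1 : Fin 6 → Fin 4 := ![0, 0, 0, 1, 1, 2]
def I2 : Fin 6 → Fin 4 := ![1, 2, 3, 2, 3, 3]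

/-- the 6 quadratic ANF coefficient functionals -/
def ℓfun (c : F16 → ZMod 2) (m : Fin 6) : ZMod 2 :=
  c 0 + c (dl (I1 m)) + c (dl (I2 m)) + c (dl (I1 m) + dl (I2 m))

def G : (F16 → ℤ) →ₗ[ℤ] (Fin 6 → ZMod 2) where
  toFun u := fun m => ℓfun (red u) m
  map_add' u v := by
    funext m
    simp only [ℓfun, red_add, Pi.add_apply]
    ring
  map_smul' z u := by
    funext m
    show ℓfun (red (z • u)) m = ((RingHom.id ℤ) z • fun m => ℓfun (red u) m) m
    rw [show red (z • u) = (z : ZMod 2) • red u from red_zsmul z u]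
    simp only [ℓfun, Pi.smul_apply, smul_eq_mul, RingHom.id_apply, zsmul_eq_mul]
    ring

lemma G_apply (u : F16 → ℤ) (m : Fin 6) : G u m = ℓfun (red u) m := rfl

set_option maxRecDepth 40000 in
lemma aff_ell : ∀ (k : ZMod 2) (l : Fin 4 → ZMod 2) (m : Fin 6),
    ℓfun (fun a => k + ∑ i, l i * a i) m = 0 := by decide

lemma G_eq_zero_of_Pu {u : F16 → ℤ} (hu : u ∈ Pu) : G u = 0 := by
  obtain ⟨k, l, hkl⟩ := hu
  funext m
  have h := aff_ell k l m
  rw [G_apply]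
  rw [show (0 : Fin 6 → ZMod 2) m = 0 from rfl]
  rw [← h]
  simp only [ℓfun, hkl]

lemma zmod2_mul_self (x : ZMod 2) : x * x = x := by revert x; decide

lemma IsAff_of_G_eq_zero {u : F16 → ℤ} (hu : u ∈ Du) (hG : G u = 0) : u ∈ Pu := by
  obtain ⟨k, l, q, hkl⟩ := hu
  have two : (2 : ZMod 2) = 0 := rfl
  have hm : ∀ m : Fin 6, ℓfun (red u) m = 0 := fun m => by
    have := congrFun hG m
    rwa [G_apply] at this
  have hs01 : q 0 1 + q 1 0 = 0 := by
    have h := hm 0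
    simp only [ℓfun, hkl, I1, I2] at h
    simp only [Fin.sum_univ_four, Matrix.cons_val_zero, Matrix.cons_val_one, Matrix.head_cons,
      Matrix.cons_val_two, Matrix.cons_val_three, Matrix.tail_cons, Pi.add_apply, Pi.zero_apply,
      dl, Pi.single_apply] at h
    simp +decide at h
    linear_combination h + (-(2*k) - l 0 - l 1 - q 0 0 - q 1 1) * two
  have hs02 : q 0 2 + q 2 0 = 0 := by
    have h := hm 1
    simp only [ℓfun, hkl, I1, I2] at h
    simp only [Fin.sum_univ_four, Matrix.cons_val_zero, Matrix.cons_val_one, Matrix.head_cons,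
      Matrix.cons_val_two, Matrix.cons_val_three, Matrix.tail_cons, Pi.add_apply, Pi.zero_apply,
      dl, Pi.single_apply] at h
    simp +decide at h
    linear_combination h + (-(2*k) - l 0 - l 2 - q 0 0 - q 2 2) * two
  have hs03 : q 0 3 + q 3 0 = 0 := by
    have h := hm 2
    simp only [ℓfun, hkl, I1, I2] at h
    simp only [Fin.sum_univ_four, Matrix.cons_val_zero, Matrix.cons_val_one, Matrix.head_cons,
      Matrix.cons_val_two, Matrix.cons_val_three, Matrix.tail_cons, Pi.add_apply, Pi.zero_apply,
      dl, Pi.single_apply] at h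
    simp +decide at h
    linear_combination h + (-(2*k) - l 0 - l 3 - q 0 0 - q 3 3) * two
  have hs12 : q 1 2 + q 2 1 = 0 := by
    have h := hm 3
    simp only [ℓfun, hkl, I1, I2] at h
    simp only [Fin.sum_univ_four, Matrix.cons_val_zero, Matrix.cons_val_one, Matrix.head_cons,
      Matrix.cons_val_two, Matrix.cons_val_three, Matrix.tail_cons, Pi.add_apply, Pi.zero_apply,
      dl, Pi.single_apply] at h
    simp +decide at h
    linear_combination h + (-(2*k) - l 1 - l 2 - q 1 1 - q 2 2) * two
  have hs13 : q 1 3 + q 3 1 = 0 := by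
    have h := hm 4
    simp only [ℓfun, hkl, I1, I2] at h
    simp only [Fin.sum_univ_four, Matrix.cons_val_zero, Matrix.cons_val_one, Matrix.head_cons,
      Matrix.cons_val_two, Matrix.cons_val_three, Matrix.tail_cons, Pi.add_apply, Pi.zero_apply,
      dl, Pi.single_apply] at h
    simp +decide at h
    linear_combination h + (-(2*k) - l 1 - l 3 - q 1 1 - q 3 3) * two
  have hs23 : q 2 3 + q 3 2 = 0 := by
    have h := hm 5
    simp only [ℓfun, hkl, I1, I2] at h
    simp only [Fin.sum_univ_four, Matrix.cons_val_zero, Matrix.cons_val_one, Matrix.head_cons,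
      Matrix.cons_val_two, Matrix.cons_val_three, Matrix.tail_cons, Pi.add_apply, Pi.zero_apply,
      dl, Pi.single_apply] at h
    simp +decide at h
    linear_combination h + (-(2*k) - l 2 - l 3 - q 2 2 - q 3 3) * two
  refine ⟨k, fun i => l i + q i i, fun a => ?_⟩
  rw [hkl a]
  simp only [Fin.sum_univ_four]
  linear_combination (a 0 * a 1) * hs01 + (a 0 * a 2) * hs02 + (a 0 * a 3) * hs03
    + (a 1 * a 2) * hs12 + (a 1 * a 3) * hs13 + (a 2 * a 3) * hs23
    + q 0 0 * zmod2_mul_self (a 0) + q 1 1 * zmod2_mul_self (a 1)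
    + q 2 2 * zmod2_mul_self (a 2) + q 3 3 * zmod2_mul_self (a 3)

end KummerAux

namespace KummerAux

def um (m : Fin 6) : F16 → ℤ := fun a => if a (I1 m) = 1 ∧ a (I2 m) = 1 then 1 else 0

lemma red_um (m : Fin 6) : red (um m) = fun a => a (I1 m) * a (I2 m) := by
  funext a
  have key : ∀ x y : ZMod 2, (if x = 1 ∧ y = 1 then (1 : ZMod 2) else 0) = x * y := by decide
  simp only [red, um, apply_ite (fun n : ℤ => (n : ZMod 2)), Int.cast_one, Int.cast_zero]
  rw [key]

lemma um_mem_Du (m : Fin 6) : um m ∈ Du := by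
  refine ⟨0, 0, fun s t => if s = I1 m ∧ t = I2 m then 1 else 0, fun a => ?_⟩
  rw [congrFun (red_um m) a]
  fin_cases m <;>
    simp +decide [Fin.sum_univ_four, show I1 0 = 0 from by decide, show I1 1 = 0 from by decide, show I1 2 = 0 from by decide, show I1 3 = 1 from by decide, show I1 4 = 1 from by decide, show I1 5 = 2 from by decide, show I2 0 = 1 from by decide, show I2 1 = 2 from by decide, show I2 2 = 3 from by decide, show I2 3 = 2 from by decide, show I2 4 = 3 from by decide, show I2 5 = 3 from by decide]

set_option maxRecDepth 40000 in
lemma ell_um : ∀ m m' : Fin 6,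
    ℓfun (fun a => a (I1 m) * a (I2 m)) m' = if m' = m then 1 else 0 := by decide

lemma G_um (m : Fin 6) : G (um m) = Pi.single m 1 := by
  funext m'
  rw [G_apply, red_um m, ell_um m m', Pi.single_apply]

/-- the restriction of `G` to `Du` -/
noncomputable def Gd : ↥Du →ₗ[ℤ] (Fin 6 → ZMod 2) := G.comp Du.subtype

lemma Gd_surj : Function.Surjective Gd := by
  intro t
  refine ⟨⟨∑ m, ((t m).val : ℤ) • um m,
    Submodule.sum_mem _ fun m _ => Submodule.smul_mem _ _ (um_mem_Du m)⟩, ?_⟩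
  show G (∑ m, ((t m).val : ℤ) • um m) = t
  rw [map_sum]
  funext m'
  rw [Finset.sum_apply]
  have : ∀ m : Fin 6, (G (((t m).val : ℤ) • um m)) m' =
      (if m' = m then ((t m).val : ℤ) • (1 : ZMod 2) else 0) := by
    intro m
    rw [map_zsmul, G_um m]
    simp [Pi.single_apply, smul_ite]
  rw [Finset.sum_congr rfl fun m _ => this m]
  rw [Finset.sum_ite_eq Finset.univ m' (fun m => ((t m).val : ℤ) • (1 : ZMod 2))]
  simp [ZMod.natCast_val, ZMod.cast_id]

lemma ker_Gd : LinearMap.ker Gd = Submodule.comap Du.subtype Pu := by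
  ext ⟨u, hu⟩
  simp only [LinearMap.mem_ker, Submodule.mem_comap, Submodule.coe_subtype]
  constructor
  · intro h
    exact IsAff_of_G_eq_zero hu h
  · intro h
    exact G_eq_zero_of_Pu h

/-- the equivalence between the integral model and the dual lattice -/
noncomputable def e1 : ↥Du ≃ₗ[ℤ] ↥(dualLat BK KummerLat) :=
  (Submodule.equivMapOfInjective ρ ρ_inj Du).trans (LinearEquiv.ofEq _ _ dual_eq.symm)

lemma e1_coe (x : ↥Du) : (e1 x : VK) = ρ x := rfl

lemma he1 : Submodule.map (e1 : ↥Du →ₗ[ℤ] ↥(dualLat BK KummerLat))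
    (Submodule.comap Du.subtype Pu) = Submodule.comap (dualLat BK KummerLat).subtype KummerLat := by
  ext ⟨v, hv⟩
  simp only [Submodule.mem_map, Submodule.mem_comap, Submodule.coe_subtype]
  constructor
  · rintro ⟨⟨u, hu⟩, hPu, hx⟩
    have hco : ρ u = v := by
      have := Subtype.ext_iff.mp hx
      simpa [e1_coe] using this
    show v ∈ KummerLat
    rw [Kummer_eq, ← hco]
    exact ⟨u, hPu, rfl⟩
  · intro hK
    rw [Kummer_eq] at hK
    obtain ⟨u, hu, rfl⟩ := hK
    refine ⟨⟨u, Pu_le_Du hu⟩, hu, ?_⟩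
    apply Subtype.ext
    simp [e1_coe]

lemma disc_card : Nat.card (Disc BK KummerLat) = 2 ^ 6 := by
  have eq1 : Nat.card (Disc BK KummerLat)
      = Nat.card (↥Du ⧸ Submodule.comap Du.subtype Pu) :=
    Nat.card_congr ((Submodule.Quotient.equiv _ _ e1 he1).toEquiv.symm)
  have eq2 : Nat.card (↥Du ⧸ Submodule.comap Du.subtype Pu)
      = Nat.card (↥Du ⧸ LinearMap.ker Gd) := by rw [ker_Gd]
  have eq3 : Nat.card (↥Du ⧸ LinearMap.ker Gd) = Nat.card (Fin 6 → ZMod 2) :=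
    Nat.card_congr (Gd.quotKerEquivOfSurjective Gd_surj).toEquiv
  rw [eq1, eq2, eq3]
  rw [Nat.card_eq_fintype_card, Fintype.card_fun]
  rfl

end KummerAux

/-- The Kummer lattice `Π` is an even negative-definite lattice of rank 16 whose
discriminant group has order `2⁶`. -/
theorem kummer_even_negdef_rank16_disc :
    (∀ v ∈ KummerLat, ∃ k : ℤ, BK v v = 2 * k) ∧
    (∀ v ∈ KummerLat, v ≠ 0 → BK v v < 0) ∧
    Nonempty (Module.Basis (Fin 16) ℤ KummerLat) ∧
    Nat.card (Disc BK KummerLat) = 2 ^ 6 := by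
  exact ⟨KummerAux.kummer_even, KummerAux.kummer_negdef, ⟨KummerAux.kummerBasis⟩,
    KummerAux.disc_card⟩
end
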